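/- arXiv:1212.5778 — 9 statements merged into one kernel-verified Lean document; each statement's English description precedes it below -/
import Mathlib

section
/- Let A and B be unital C*-algebras each satisfying the AW* annihilator condition, and let f : A → B be a unital *-ring homomorphism (additive, multiplicative, f(1) = 1, f(a*) = f(a)*). Then the following conditions are equivalent: (a) f preserves right annihilating projections: whenever S ⊆ A, p is a projection of A such that for all x ∈ A one has (∀ s ∈ S, s·x = 0) ↔ p·x = x, and q is a projection of B such that for all y ∈ B one has (∀ s ∈ S, f(s)·y = 0) ↔ q·y = y, then f(p) = q; (b) f preserves suprema of arbitrary families of projections: whenever p is a least upper bound of a set P of projections of A in the projection order, f(p) is a least upper bound of the image set f(P) in the projection order of B; (c) f preserves suprema of orthogonal families of projections, i.e., condition (b) restricted to sets P of projections satisfying p·q = 0 for all distinct p, q ∈ P; (d) f preserves suprema of upward-directed sets of projections, i.e., condition (b) restricted to sets P such that any two elements of P have an upper bound in P. -/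
/-- `p` is a projection in a `*`-ring: a self-adjoint idempotent. -/
def IsProjElem {A : Type*} [Mul A] [Star A] (p : A) : Prop :=
  p * p = p ∧ star p = p

/-- The AW* annihilator condition: the right annihilator of any subset is
generated (as a right ideal) by a projection. -/
def AWStarAnnihilator (A : Type*) [Mul A] [Star A] [Zero A] : Prop :=
  ∀ S : Set A, ∃ p : A, IsProjElem p ∧ ∀ x : A, (∀ s ∈ S, s * x = 0) ↔ p * x = x

/-- `p` is a least upper bound of the set `P` of projections in the projection
order `q ≤ p ↔ q * p = q`. -/
def IsProjLUB {A : Type*} [Mul A] [Star A] (P : Set A) (p : A) : Prop :=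
  IsProjElem p ∧ (∀ q ∈ P, q * p = q) ∧
    ∀ r : A, IsProjElem r → (∀ q ∈ P, q * r = q) → p * r = p

section Basic
variable {A : Type*} [CStarAlgebra A]

lemma proj_star_mul_self {e : A} (he : IsProjElem e) : star e * e = e := by
  rw [he.2, he.1]

lemma proj_one_sub {e : A} (he : IsProjElem e) : IsProjElem (1 - e) := by
  constructor
  · have h2 : (1 - e) * (1 - e) = 1 - e - e + e * e := by noncomm_ring
    rw [h2, he.1]; abel
  · rw [star_sub, star_one, he.2]

lemma proj_comm_of_le {p q : A} (hp : IsProjElem p) (hq : IsProjElem q)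
    (h : p * q = p) : q * p = p := by
  have := congrArg star h
  rwa [star_mul, hp.2, hq.2] at this

lemma proj_antisymm {p q : A} (hp : IsProjElem p) (hq : IsProjElem q)
    (h1 : p * q = p) (h2 : q * p = q) : p = q := by
  calc p = star p := hp.2.symm
    _ = star (p * q) := by rw [h1]
    _ = star q * star p := star_mul _ _
    _ = q * p := by rw [hq.2, hp.2]
    _ = q := h2

lemma proj_sub {p q : A} (hp : IsProjElem p) (hq : IsProjElem q)
    (h : p * q = p) : IsProjElem (q - p) := by
  have h' := proj_comm_of_le hp hq h
  constructor
  · have h2 : (q - p) * (q - p) = q * q - q * p - p * q + p * p := by noncomm_ring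
    rw [h2, hq.1, h', h, hp.1]; abel
  · rw [star_sub, hp.2, hq.2]

lemma proj_trans_le {p q r : A} (h1 : p * q = p) (h2 : q * r = q) : p * r = p := by
  rw [← h1, mul_assoc, h2, h1]

section Order
variable [PartialOrder A] [StarOrderedRing A]

lemma proj_nonneg {e : A} (he : IsProjElem e) : 0 ≤ e :=
  (proj_star_mul_self he) ▸ star_mul_self_nonneg e

lemma proj_kills_of_le {e b y : A} (he : IsProjElem e) (hle : e ≤ b)
    (hy : b * y = 0) : e * y = 0 := by
  have h1 : star y * e * y ≤ star y * b * y := star_left_conjugate_le_conjugate hle y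
  have h2 : star y * b * y = 0 := by rw [mul_assoc, hy, mul_zero]
  have h3 : star (e * y) * (e * y) = star y * e * y := by
    rw [star_mul, he.2, mul_assoc, ← mul_assoc e e y, he.1, ← mul_assoc]
  have h4 : (0 : A) ≤ star (e * y) * (e * y) := star_mul_self_nonneg _
  have h5 : star (e * y) * (e * y) = 0 := le_antisymm (h3 ▸ h2 ▸ h1) h4
  exact (CStarRing.star_mul_self_eq_zero_iff _).mp h5

end Order

lemma star_mul_self_kill {s y : A} : star s * s * y = 0 ↔ s * y = 0 := by
  constructor
  · intro h
    have h2 : star (s * y) * (s * y) = star y * (star s * s * y) := by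
      rw [star_mul]; noncomm_ring
    rw [h, mul_zero] at h2
    exact (CStarRing.star_mul_self_eq_zero_iff _).mp h2
  · intro h; rw [mul_assoc, h, mul_zero]

lemma annp_unique {P : A → Prop} {p p' : A} (hp : IsProjElem p) (hp' : IsProjElem p')
    (h : ∀ x, P x ↔ p * x = x) (h' : ∀ x, P x ↔ p' * x = x) : p = p' := by
  have h1 : p * p' = p' := (h p').mp ((h' p').mpr hp'.1)
  have h2 : p' * p = p := (h' p).mp ((h p).mpr hp.1)
  have h1' : p' * p = p' := by
    have := congrArg star h1; rwa [star_mul, hp.2, hp'.2] at this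
  have h2' : p * p' = p := by
    have := congrArg star h2; rwa [star_mul, hp.2, hp'.2] at this
  exact proj_antisymm hp hp' h2' h1'

lemma isProjLUB_one_sub {T : Set A} {e : A} (he : IsProjElem e)
    (hspec : ∀ x : A, (∀ t ∈ T, t * x = 0) ↔ e * x = x)
    (hT : ∀ t ∈ T, IsProjElem t) : IsProjLUB T (1 - e) := by
  refine ⟨proj_one_sub he, ?_, ?_⟩
  · intro t ht
    have hte : t * e = 0 := (hspec e).mpr he.1 t ht
    rw [mul_sub, mul_one, hte, sub_zero]
  · intro r hr hub
    have h1 : ∀ t ∈ T, t * (1 - r) = 0 := fun t ht => by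
      rw [mul_sub, mul_one, hub t ht, sub_self]
    have h2 : e * (1 - r) = 1 - r := (hspec (1 - r)).mp h1
    have h6 : e - e * r = 1 - r := by
      calc e - e * r = e * (1 - r) := by noncomm_ring
        _ = 1 - r := h2
    set u := e * r with hu
    rw [sub_eq_iff_eq_add] at h6
    have h8 : (1 - e) * r = r - u := by rw [hu]; noncomm_ring
    rw [h8, h6]; abel

lemma isProjLUB_unique {T : Set A} {p p' : A} (h : IsProjLUB T p) (h' : IsProjLUB T p') :
    p = p' :=
  proj_antisymm h.1 h'.1 (h.2.2 p' h'.1 h'.2.1) (h'.2.2 p h.1 h.2.1)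

end Basic

lemma mul_eq_self_of_mul_one_sub {A : Type*} [CStarAlgebra A] {z w : A}
    (h : z * (1 - w) = 0) : z * w = z := by
  rw [mul_sub, mul_one, sub_eq_zero] at h; exact h.symm
section RP
variable {A : Type*} [CStarAlgebra A]

noncomputable def annp (hA : AWStarAnnihilator A) (S : Set A) : A := (hA S).choose

lemma annp_proj (hA : AWStarAnnihilator A) (S : Set A) : IsProjElem (annp hA S) :=
  (hA S).choose_spec.1

lemma annp_spec (hA : AWStarAnnihilator A) (S : Set A) :
    ∀ x : A, (∀ s ∈ S, s * x = 0) ↔ annp hA S * x = x :=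
  (hA S).choose_spec.2

lemma annp_kills (hA : AWStarAnnihilator A) {S : Set A} {s : A} (hs : s ∈ S) :
    s * annp hA S = 0 :=
  (annp_spec hA S (annp hA S)).mpr (annp_proj hA S).1 s hs

noncomputable def rp (hA : AWStarAnnihilator A) (x : A) : A := 1 - annp hA {x}

lemma rp_proj (hA : AWStarAnnihilator A) (x : A) : IsProjElem (rp hA x) :=
  proj_one_sub (annp_proj hA {x})

lemma rp_spec (hA : AWStarAnnihilator A) (x y : A) : x * y = 0 ↔ rp hA x * y = 0 := by
  have h := annp_spec hA {x} y
  simp only [Set.mem_singleton_iff, forall_eq] at h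
  rw [h, rp]
  constructor
  · intro h2; rw [sub_mul, one_mul, h2, sub_self]
  · intro h2; rw [sub_mul, one_mul, sub_eq_zero] at h2; exact h2.symm

lemma mul_rp_self (hA : AWStarAnnihilator A) (x : A) : x * rp hA x = x := by
  have h : x * annp hA {x} = 0 := annp_kills hA rfl
  rw [rp, mul_sub, mul_one, h, sub_zero]

lemma rp_proj_eq (hA : AWStarAnnihilator A) {e : A} (he : IsProjElem e) : rp hA e = e := by
  refine proj_antisymm (rp_proj hA e) he ?_ ?_
  ·
    have h : e * (1 - e) = 0 := by rw [mul_sub, mul_one, he.1, sub_self]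
    have h2 := (rp_spec hA e (1 - e)).mp h
    rw [mul_sub, mul_one, sub_eq_zero] at h2
    exact h2.symm
  · exact mul_rp_self hA e

lemma rp_star_mul_self (hA : AWStarAnnihilator A) (s : A) :
    rp hA (star s * s) = rp hA s := by
  have h : annp hA {star s * s} = annp hA {s} := by
    refine annp_unique (P := fun y => s * y = 0) (annp_proj hA _) (annp_proj hA _)
      (fun y => ?_) (fun y => ?_)
    · show s * y = 0 ↔ _
      rw [← star_mul_self_kill]
      have h := annp_spec hA {star s * s} y
      simpa only [Set.mem_singleton_iff, forall_eq] using h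
    · show s * y = 0 ↔ _
      have h := annp_spec hA {s} y
      simpa only [Set.mem_singleton_iff, forall_eq] using h
  rw [rp, rp, h]

end RP
section CFC
open scoped Topology
variable {A : Type*} [CStarAlgebra A]

noncomputable def hfun (n : ℕ) : ℝ → ℝ := fun t => max (t - 1/(n+1)) 0
noncomputable def kfun (n : ℕ) : ℝ → ℝ := fun t => (max t (1/(n+1)))⁻¹

lemma eps_pos (n : ℕ) : (0:ℝ) < 1/(n+1) := by positivity

lemma hfun_cont (n : ℕ) : Continuous (hfun n) :=
  (continuous_id.sub continuous_const).max continuous_const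

lemma kfun_cont (n : ℕ) : Continuous (kfun n) :=
  (continuous_id.max continuous_const).inv₀ fun t =>
    ne_of_gt (lt_of_lt_of_le (eps_pos n) (le_max_right _ _))

lemma ident1 (n : ℕ) (t : ℝ) : hfun n t * (1 - kfun n t * t) = 0 := by
  rcases le_or_gt t (1/(n+1)) with h | h
  · have : hfun n t = 0 := max_eq_right (by linarith)
    rw [this, zero_mul]
  · have hk : kfun n t = t⁻¹ := by rw [kfun]; rw [max_eq_left h.le]
    have ht : t ≠ 0 := ne_of_gt (lt_trans (eps_pos n) h)
    rw [hk, inv_mul_cancel₀ ht, sub_self, mul_zero]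

noncomputable def efam (hA : AWStarAnnihilator A) (a : A) (n : ℕ) : A :=
  rp hA (cfc (hfun n) a)

noncomputable def dfam (hA : AWStarAnnihilator A) (a : A) : ℕ → A
  | 0 => efam hA a 0
  | n+1 => efam hA a (n+1) - efam hA a n

variable (hA : AWStarAnnihilator A) {a : A} (hsa : IsSelfAdjoint a)

lemma mul_one_sub_rp (x : A) : x * (1 - rp hA x) = 0 := by
  rw [mul_sub, mul_one, mul_rp_self, sub_self]

lemma efam_proj (n : ℕ) : IsProjElem (efam hA a n) := rp_proj hA _

include hsa in
lemma cfc_fact1 (n : ℕ) :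
    cfc (hfun n) a * (1 - cfc (kfun n) a * a) = 0 := by
  have h1 : cfc (fun t : ℝ => kfun n t * t) a = cfc (kfun n) a * a := by
    rw [cfc_mul (kfun n) (fun t : ℝ => t) a ((kfun_cont n).continuousOn)
      (continuous_id.continuousOn), cfc_id' ℝ a hsa]
  have h2 : cfc (fun t : ℝ => 1 - kfun n t * t) a = 1 - cfc (fun t : ℝ => kfun n t * t) a := by
    rw [cfc_sub (fun _ : ℝ => (1:ℝ)) (fun t : ℝ => kfun n t * t) a continuousOn_const
      (((kfun_cont n).mul continuous_id).continuousOn), cfc_const_one ℝ a hsa]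
  calc cfc (hfun n) a * (1 - cfc (kfun n) a * a)
      = cfc (hfun n) a * cfc (fun t : ℝ => 1 - kfun n t * t) a := by rw [h2, h1]
    _ = cfc (fun t : ℝ => hfun n t * (1 - kfun n t * t)) a := by
        rw [cfc_mul (hfun n) (fun t : ℝ => 1 - kfun n t * t) a ((hfun_cont n).continuousOn)
          ((continuous_const.sub ((kfun_cont n).mul continuous_id)).continuousOn)]
    _ = cfc (fun _ : ℝ => (0:ℝ)) a := by
        congr 1; funext t; exact ident1 n t
    _ = 0 := cfc_const_zero ℝ a

include hsa in
lemma efam_factor (n : ℕ) :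
    efam hA a n = (efam hA a n * cfc (kfun n) a) * a := by
  have h := (rp_spec hA (cfc (hfun n) a) (1 - cfc (kfun n) a * a)).mp (cfc_fact1 hsa n)
  rw [mul_sub, mul_one, sub_eq_zero] at h
  rw [mul_assoc]; exact h

include hsa in
lemma mem_ideal_factor {z : A} (n : ℕ) (hz : z * efam hA a n = z) :
    z = (z * (efam hA a n * cfc (kfun n) a)) * a := by
  conv_lhs => rw [← hz, efam_factor hA hsa n]
  rw [← mul_assoc, ← mul_assoc]

include hsa in
lemma efam_le_rp (n : ℕ) : efam hA a n * rp hA a = efam hA a n := by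
  have h0 : cfc (hfun n) a * (1 - rp hA a) = 0 := by
    have hf : cfc (hfun n) a = (cfc (hfun n) a * cfc (kfun n) a) * a := by
      have h := cfc_fact1 hsa n
      rw [mul_sub, mul_one, sub_eq_zero] at h
      rw [mul_assoc]; exact h
    rw [hf, mul_assoc, mul_assoc, mul_one_sub_rp hA a, mul_zero, mul_zero]
  have h := (rp_spec hA (cfc (hfun n) a) (1 - rp hA a)).mp h0
  rw [mul_sub, mul_one, sub_eq_zero] at h
  exact h.symm

noncomputable def rho (n : ℕ) : ℝ → ℝ :=
  fun t => hfun n t * (max (hfun (n+1) t) (1/(n+1) - 1/(n+2)))⁻¹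

lemma delta_pos (n : ℕ) : (0:ℝ) < 1/(n+1) - 1/(n+2) := by
  have h1 : (0:ℝ) < n+1 := by positivity
  have h2 : (0:ℝ) < n+2 := by positivity
  rw [sub_pos, div_lt_div_iff₀ h2 h1]
  linarith

lemma rho_cont (n : ℕ) : Continuous (rho n) :=
  (hfun_cont n).mul (((hfun_cont (n+1)).max continuous_const).inv₀ fun t =>
    ne_of_gt (lt_of_lt_of_le (delta_pos n) (le_max_right _ _)))

lemma ident2 (n : ℕ) (t : ℝ) : hfun n t = rho n t * hfun (n+1) t := by
  have hle : (1:ℝ)/(n+2) < 1/(n+1) := by linarith [delta_pos n]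
  rcases le_or_gt t (1/(n+1)) with h | h
  · have h0 : hfun n t = 0 := max_eq_right (by linarith)
    have h0' : rho n t = 0 := by rw [rho, h0, zero_mul]
    rw [h0, h0', zero_mul]
  · have h0 : (0:ℝ) ≤ t - 1/((n:ℝ)+2) := by linarith
    have h1 : hfun (n+1) t = t - 1/((n:ℝ)+2) := by
      unfold hfun; push_cast
      rw [show ((n:ℝ)+1+1) = (n:ℝ)+2 by ring]
      exact max_eq_left h0
    have h2 : (1:ℝ)/(n+1) - 1/(n+2) < hfun (n+1) t := by rw [h1]; linarith
    have h3 : max (hfun (n+1) t) (1/((n:ℝ)+1) - 1/((n:ℝ)+2)) = hfun (n+1) t :=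
      max_eq_left h2.le
    have h4 : hfun (n+1) t ≠ 0 := by rw [h1]; intro hc; rw [sub_eq_zero] at hc; linarith
    rw [rho, h3, mul_assoc, inv_mul_cancel₀ h4, mul_one]

omit hsa in
include hA in
lemma efam_mono_succ (n : ℕ) : efam hA a n * efam hA a (n+1) = efam hA a n := by
  have hcfc : cfc (hfun n) a = cfc (rho n) a * cfc (hfun (n+1)) a := by
    rw [← cfc_mul _ _ a ((rho_cont n).continuousOn) ((hfun_cont (n+1)).continuousOn)]
    congr 1; funext t; exact ident2 n t
  have h0 : cfc (hfun n) a * (1 - efam hA a (n+1)) = 0 := by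
    have hd : efam hA a (n+1) = rp hA (cfc (hfun (n+1)) a) := rfl
    rw [hcfc, mul_assoc, hd, mul_one_sub_rp hA, mul_zero]
  have h := (rp_spec hA (cfc (hfun n) a) (1 - efam hA a (n+1))).mp h0
  rw [mul_sub, mul_one, sub_eq_zero] at h
  exact h.symm

omit hsa in
include hA in
lemma efam_mono {n m : ℕ} (h : n ≤ m) : efam hA a n * efam hA a m = efam hA a n := by
  induction m, h using Nat.le_induction with
  | base => exact (efam_proj hA n).1
  | succ m hm ih => exact proj_trans_le ih (efam_mono_succ hA m)

section Least
variable [PartialOrder A] [StarOrderedRing A]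

include hsa in
lemma efam_least (ha : 0 ≤ a) {r : A} (hr : IsProjElem r)
    (hub : ∀ n, efam hA a n * r = efam hA a n) : rp hA a * r = rp hA a := by
  have key : a * (1 - r) = 0 := by
    have hbd : ∀ n : ℕ, ‖a * (1 - r)‖ ≤ 1/((n:ℝ)+1) * ‖(1:A) - r‖ := by
      intro n
      have hz : cfc (hfun n) a * (1 - r) = 0 := by
        have h1 : cfc (hfun n) a * efam hA a n = cfc (hfun n) a := mul_rp_self hA _
        have h2 : efam hA a n * (1 - r) = 0 := by
          rw [mul_sub, mul_one, hub n, sub_self]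
        rw [← h1, mul_assoc, h2, mul_zero]
      have hsplit : a * (1 - r) = (a - cfc (hfun n) a) * (1 - r) := by
        rw [sub_mul, hz, sub_zero]
      have hnorm : ‖a - cfc (hfun n) a‖ ≤ 1/((n:ℝ)+1) := by
        have hEq : a - cfc (hfun n) a = cfc (fun t : ℝ => t - hfun n t) a := by
          rw [cfc_sub (fun t : ℝ => t) (hfun n) a (continuous_id.continuousOn)
            ((hfun_cont n).continuousOn), cfc_id' ℝ a hsa]
        rw [hEq]
        refine norm_cfc_le (by positivity) fun x hx => ?_
        have hx0 : 0 ≤ x := spectrum_nonneg_of_nonneg ha hx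
        rw [Real.norm_eq_abs, abs_le]
        unfold hfun
        rcases le_or_gt x (1/((n:ℝ)+1)) with h | h
        · rw [max_eq_right (by linarith)]
          constructor <;> linarith [eps_pos n]
        · rw [max_eq_left (by linarith)]
          constructor <;> linarith [eps_pos n]
      calc ‖a * (1 - r)‖ = ‖(a - cfc (hfun n) a) * (1 - r)‖ := by rw [← hsplit]
        _ ≤ ‖a - cfc (hfun n) a‖ * ‖(1:A) - r‖ := norm_mul_le _ _
        _ ≤ 1/((n:ℝ)+1) * ‖(1:A) - r‖ :=
            mul_le_mul_of_nonneg_right hnorm (norm_nonneg _)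
    have hlim : Filter.Tendsto (fun n : ℕ => 1/((n:ℝ)+1) * ‖(1:A) - r‖)
        Filter.atTop (𝓝 (0 * ‖(1:A) - r‖)) :=
      tendsto_one_div_add_atTop_nhds_zero_nat.mul_const _
    rw [zero_mul] at hlim
    have hle0 : ‖a * (1 - r)‖ ≤ 0 := ge_of_tendsto' hlim hbd
    rw [← norm_le_zero_iff]
    exact hle0
  have h := (rp_spec hA a (1 - r)).mp key
  rw [mul_sub, mul_one, sub_eq_zero] at h
  exact h.symm

end Least

end CFC
section DFam
open scoped Topology
variable {A : Type*} [CStarAlgebra A] (hA : AWStarAnnihilator A) {a : A} (hsa : IsSelfAdjoint a)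

lemma dfam_proj (n : ℕ) : IsProjElem (dfam hA a n) := by
  cases n with
  | zero => exact efam_proj hA 0
  | succ m => exact proj_sub (efam_proj hA m) (efam_proj hA (m+1)) (efam_mono_succ hA m)

lemma dfam_mul_efam (n : ℕ) : dfam hA a n * efam hA a n = dfam hA a n := by
  cases n with
  | zero => exact (efam_proj hA 0).1
  | succ m =>
    show (efam hA a (m+1) - efam hA a m) * efam hA a (m+1) = _
    rw [sub_mul, (efam_proj hA (m+1)).1, efam_mono_succ hA m]
    simp [dfam]

lemma efam_mul_dfam_zero (n : ℕ) : efam hA a n * dfam hA a (n+1) = 0 := by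
  show efam hA a n * (efam hA a (n+1) - efam hA a n) = 0
  rw [mul_sub, efam_mono_succ hA n, (efam_proj hA n).1, sub_self]

lemma dfam_mul_efam_le {i m : ℕ} (h : i ≤ m) :
    dfam hA a i * efam hA a m = dfam hA a i := by
  rw [← dfam_mul_efam hA i, mul_assoc, efam_mono hA h, dfam_mul_efam hA i]

lemma dfam_orth {i j : ℕ} (h : i < j) : dfam hA a i * dfam hA a j = 0 := by
  obtain ⟨m, rfl⟩ : ∃ m, j = m + 1 := ⟨j - 1, by omega⟩
  have h1 : dfam hA a i * efam hA a m = dfam hA a i := dfam_mul_efam_le hA (by omega)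
  rw [← h1, mul_assoc, efam_mul_dfam_zero hA m, mul_zero]

lemma dfam_ub_to_efam {r : A} (hub : ∀ n, dfam hA a n * r = dfam hA a n) :
    ∀ n, efam hA a n * r = efam hA a n := by
  intro n
  induction n with
  | zero => exact hub 0
  | succ m ih =>
    have hd : dfam hA a (m+1) = efam hA a (m+1) - efam hA a m := by simp [dfam]
    have h1 : efam hA a (m+1) = efam hA a m + dfam hA a (m+1) := by
      rw [hd]; abel
    rw [h1, add_mul, ih, hub (m+1)]

include hsa in
lemma dfam_le_rp (n : ℕ) : dfam hA a n * rp hA a = dfam hA a n := by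
  rw [← dfam_mul_efam hA n, mul_assoc, efam_le_rp hA hsa n, dfam_mul_efam hA n]

section Ordered
variable [PartialOrder A] [StarOrderedRing A]

include hsa in
lemma efam_lub (ha : 0 ≤ a) : IsProjLUB (Set.range (efam hA a)) (rp hA a) := by
  refine ⟨rp_proj hA a, ?_, ?_⟩
  · rintro q ⟨n, rfl⟩; exact efam_le_rp hA hsa n
  · intro r hr hub
    exact efam_least hA hsa ha hr fun n => hub _ ⟨n, rfl⟩

include hsa in
lemma dfam_lub (ha : 0 ≤ a) : IsProjLUB (Set.range (dfam hA a)) (rp hA a) := by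
  refine ⟨rp_proj hA a, ?_, ?_⟩
  · rintro q ⟨n, rfl⟩; exact dfam_le_rp hA hsa n
  · intro r hr hub
    exact efam_least hA hsa ha hr (dfam_ub_to_efam hA fun n => hub _ ⟨n, rfl⟩)

end Ordered
end DFam

section Hom
variable {A B : Type*} [CStarAlgebra A] [CStarAlgebra B]
variable (f : A → B) (hadd : ∀ a b : A, f (a + b) = f a + f b)
variable (hmul : ∀ a b : A, f (a * b) = f a * f b)
variable (hone : f 1 = 1) (hstar : ∀ a : A, f (star a) = star (f a))

include hadd in
lemma f_zero : f 0 = 0 := by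
  have h := hadd 0 0
  rw [add_zero] at h
  exact left_eq_add.mp h

include hadd in
lemma f_sub (a b : A) : f (a - b) = f a - f b := by
  have h := hadd (a - b) b
  rw [sub_add_cancel] at h
  rw [h]; abel

include hmul hstar in
lemma f_proj {p : A} (hp : IsProjElem p) : IsProjElem (f p) := by
  constructor
  · rw [← hmul, hp.1]
  · rw [← hstar, hp.2]

include hmul in
lemma rp_map_eq (hA : AWStarAnnihilator A) (hB : AWStarAnnihilator B)
    (hstar : ∀ a : A, f (star a) = star (f a))
    {a : A} (P : Set A) (hfac : ∀ z ∈ P, ∃ c : A, z = c * a)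
    (H : IsProjLUB (f '' P) (f (rp hA a))) : f (rp hA a) = rp hB (f a) := by
  have dir1 : f (rp hA a) * rp hB (f a) = f (rp hA a) := by
    refine H.2.2 (rp hB (f a)) (rp_proj hB _) ?_
    rintro b ⟨z, hz, rfl⟩
    obtain ⟨c, rfl⟩ := hfac z hz
    rw [hmul, mul_assoc, mul_rp_self hB (f a)]
  have dir2 : rp hB (f a) * f (rp hA a) = rp hB (f a) := by
    have h0 : f a * (1 - f (rp hA a)) = 0 := by
      rw [mul_sub, mul_one, ← hmul, mul_rp_self hA a, sub_self]
    have h := (rp_spec hB (f a) (1 - f (rp hA a))).mp h0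
    rw [mul_sub, mul_one, sub_eq_zero] at h
    exact h.symm
  exact proj_antisymm (f_proj f hmul hstar (rp_proj hA a)) (rp_proj hB _) dir1 dir2

end Hom
section Impl
variable {A B : Type*} [CStarAlgebra A] [CStarAlgebra B]
variable (hA : AWStarAnnihilator A) (hB : AWStarAnnihilator B)
variable (f : A → B)

section Pres
variable [PartialOrder A] [StarOrderedRing A]
variable (hmul : ∀ a b : A, f (a * b) = f a * f b)
variable (hstar : ∀ a : A, f (star a) = star (f a))

include hmul hstar in
lemma rp_pres_of_orth
    (h3 : ∀ (P : Set A) (p : A), (∀ q ∈ P, IsProjElem q) →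
      (∀ q ∈ P, ∀ r ∈ P, q ≠ r → q * r = 0) →
      IsProjLUB P p → IsProjLUB (f '' P) (f p)) :
    ∀ s : A, f (rp hA s) = rp hB (f s) := by
  intro s
  set a := star s * s with ha_def
  have ha : 0 ≤ a := star_mul_self_nonneg s
  have hsa : IsSelfAdjoint a := by rw [ha_def]; show star _ = _; rw [star_mul, star_star]
  have hproj : ∀ q ∈ Set.range (dfam hA a), IsProjElem q := by
    rintro q ⟨n, rfl⟩; exact dfam_proj hA n
  have horth : ∀ q ∈ Set.range (dfam hA a), ∀ r ∈ Set.range (dfam hA a),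
      q ≠ r → q * r = 0 := by
    rintro q ⟨i, rfl⟩ r ⟨j, rfl⟩ hne
    rcases lt_trichotomy i j with h | h | h
    · exact dfam_orth hA h
    · exact absurd (by rw [h]) hne
    · have h0 := dfam_orth hA (a := a) h
      have h1 := congrArg star h0
      rwa [star_mul, (dfam_proj hA i).2, (dfam_proj hA j).2, star_zero] at h1
  have Hlub := h3 _ _ hproj horth (dfam_lub hA hsa ha)
  have hfac : ∀ z ∈ Set.range (dfam hA a), ∃ c : A, z = c * a := by
    rintro z ⟨n, rfl⟩
    exact ⟨dfam hA a n * (efam hA a n * cfc (kfun n) a),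
      mem_ideal_factor hA hsa n (dfam_mul_efam hA n)⟩
  have h1 : f (rp hA a) = rp hB (f a) := rp_map_eq f hmul hA hB hstar _ hfac Hlub
  have h2 : f (rp hA s) = f (rp hA a) := by rw [ha_def, rp_star_mul_self hA s]
  have h3' : rp hB (f a) = rp hB (f s) := by
    rw [ha_def, hmul, hstar, rp_star_mul_self hB (f s)]
  rw [h2, h1, h3']

include hmul hstar in
lemma rp_pres_of_dir
    (h4 : ∀ (P : Set A) (p : A), (∀ q ∈ P, IsProjElem q) →
      (∀ q ∈ P, ∀ r ∈ P, ∃ s ∈ P, q * s = q ∧ r * s = r) →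
      IsProjLUB P p → IsProjLUB (f '' P) (f p)) :
    ∀ s : A, f (rp hA s) = rp hB (f s) := by
  intro s
  set a := star s * s with ha_def
  have ha : 0 ≤ a := star_mul_self_nonneg s
  have hsa : IsSelfAdjoint a := by rw [ha_def]; show star _ = _; rw [star_mul, star_star]
  have hproj : ∀ q ∈ Set.range (efam hA a), IsProjElem q := by
    rintro q ⟨n, rfl⟩; exact efam_proj hA n
  have hdir : ∀ q ∈ Set.range (efam hA a), ∀ r ∈ Set.range (efam hA a),
      ∃ s ∈ Set.range (efam hA a), q * s = q ∧ r * s = r := by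
    rintro q ⟨i, rfl⟩ r ⟨j, rfl⟩
    exact ⟨efam hA a (max i j), ⟨max i j, rfl⟩,
      efam_mono hA (le_max_left i j), efam_mono hA (le_max_right i j)⟩
  have Hlub := h4 _ _ hproj hdir (efam_lub hA hsa ha)
  have hfac : ∀ z ∈ Set.range (efam hA a), ∃ c : A, z = c * a := by
    rintro z ⟨n, rfl⟩
    exact ⟨efam hA a n * (efam hA a n * cfc (kfun n) a),
      mem_ideal_factor hA hsa n (efam_proj hA n).1⟩
  have h1 : f (rp hA a) = rp hB (f a) := rp_map_eq f hmul hA hB hstar _ hfac Hlub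
  have h2 : f (rp hA s) = f (rp hA a) := by rw [ha_def, rp_star_mul_self hA s]
  have h3' : rp hB (f a) = rp hB (f s) := by
    rw [ha_def, hmul, hstar, rp_star_mul_self hB (f s)]
  rw [h2, h1, h3']

end Pres

section ToA
variable (hadd : ∀ a b : A, f (a + b) = f a + f b)
variable (hmul : ∀ a b : A, f (a * b) = f a * f b)
variable (hone : f 1 = 1) (hstar : ∀ a : A, f (star a) = star (f a))

include hadd hmul hone hstar in
lemma conclude_a {S : Set A} {p : A} {q : B} (hp : IsProjElem p) (hq : IsProjElem q)
    (hpann : ∀ x : A, (∀ s ∈ S, s * x = 0) ↔ p * x = x)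
    (hqann : ∀ y : B, (∀ s ∈ S, f s * y = 0) ↔ q * y = y)
    (h0 : f (1 - p) * q = 0) : f p = q := by
  have hfp : IsProjElem (f p) := f_proj f hmul hstar hp
  have h1 : f (1 - p) = 1 - f p := by rw [f_sub f hadd, hone]
  have h2 : f p * q = q := by
    rw [h1, sub_mul, one_mul, sub_eq_zero] at h0
    exact h0.symm
  have h3 : q * f p = f p := by
    refine (hqann (f p)).mp fun s hs => ?_
    have hsp : s * p = 0 := (hpann p).mpr hp.1 s hs
    rw [← hmul, hsp, f_zero f hadd]
  have h4 : f p * q = f p := by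
    have := congrArg star h3
    rwa [star_mul, hfp.2, hq.2] at this
  rw [← h2, h4]

include hadd hmul hone hstar in
lemma a_of_rp_pres_orth
    [PartialOrder A] [StarOrderedRing A]
    (h3 : ∀ (P : Set A) (p : A), (∀ q ∈ P, IsProjElem q) →
      (∀ q ∈ P, ∀ r ∈ P, q ≠ r → q * r = 0) →
      IsProjLUB P p → IsProjLUB (f '' P) (f p))
    (hrp : ∀ s : A, f (rp hA s) = rp hB (f s)) :
    ∀ (S : Set A) (p : A) (q : B), IsProjElem p → IsProjElem q →
      (∀ x : A, (∀ s ∈ S, s * x = 0) ↔ p * x = x) →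
      (∀ y : B, (∀ s ∈ S, f s * y = 0) ↔ q * y = y) →
      f p = q := by
  intro S p q hp hq hpann hqann
  classical
  have hSq : ∀ s ∈ S, f s * q = 0 := (hqann q).mpr hq.1
  set O : Set (Set A) := {E | (∀ e ∈ E, IsProjElem e ∧ f e * q = 0) ∧
    ∀ e ∈ E, ∀ e' ∈ E, e ≠ e' → e * e' = 0} with hO
  obtain ⟨E, hEmax⟩ := zorn_subset O (by
    intro c hc hchain
    refine ⟨⋃₀ c, ⟨?_, ?_⟩, fun s hs => Set.subset_sUnion_of_mem hs⟩
    · rintro e ⟨t, ht, het⟩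
      exact (hc ht).1 e het
    · rintro e ⟨t, ht, het⟩ e' ⟨t', ht', het'⟩ hne
      rcases hchain.total ht ht' with h | h
      · exact (hc ht').2 e (h het) e' het' hne
      · exact (hc ht).2 e het e' (h het') hne)
  have hE := hEmax.prop
  set r : A := 1 - annp hA E with hr_def
  have hElub : IsProjLUB E r :=
    isProjLUB_one_sub (annp_proj hA E) (annp_spec hA E) (fun t ht => (hE.1 t ht).1)
  have HB := h3 E r (fun t ht => (hE.1 t ht).1) hE.2 hElub
  have hfrq : f r * q = 0 := by
    have h1 := HB.2.2 (1 - q) (proj_one_sub hq) (by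
      rintro b ⟨e, he, rfl⟩
      rw [mul_sub, mul_one, (hE.1 e he).2, sub_zero])
    rw [mul_sub, mul_one, sub_eq_self] at h1
    exact h1
  have hM : ∀ x : A, f x * q = 0 → x * (1 - r) = 0 := by
    intro x hx
    set w := x * (1 - r) with hw
    have hwq : f w * q = 0 := by
      have hfw : f w = f x * (1 - f r) := by
        rw [hw, hmul, f_sub f hadd, hone]
      calc f w * q = f x * (q - f r * q) := by rw [hfw]; noncomm_ring
        _ = f x * q := by rw [hfrq, sub_zero]
        _ = 0 := hx
    have he'q : f (rp hA w) * q = 0 := by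
      rw [hrp w]; exact (rp_spec hB (f w) q).mp hwq
    have he'r : rp hA w * r = 0 := by
      refine (rp_spec hA w r).mp ?_
      have h5 : (1 - r) * r = 0 := by
        rw [sub_mul, one_mul, hElub.1.1, sub_self]
      rw [hw, mul_assoc, h5, mul_zero]
    have hins : insert (rp hA w) E ∈ O := by
      constructor
      · rintro e (rfl | he)
        exacts [⟨rp_proj hA w, he'q⟩, hE.1 e he]
      · have hre : ∀ e ∈ E, rp hA w * e = 0 := by
          intro e he
          have h6 : e * r = e := hElub.2.1 e he
          have h7 : r * e = e := proj_comm_of_le (hE.1 e he).1 hElub.1 h6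
          rw [← h7, ← mul_assoc, he'r, zero_mul]
        rintro e (rfl | he) e' (rfl | he') hne
        · exact absurd rfl hne
        · exact hre e' he'
        · have := congrArg star (hre e he)
          rwa [star_mul, (rp_proj hA w).2, (hE.1 e he).1.2, star_zero] at this
        · exact hE.2 e he e' he' hne
    have hrw_mem : rp hA w ∈ E :=
      hEmax.2 hins (Set.subset_insert _ _) (Set.mem_insert _ _)
    have h8 : rp hA w = 0 := by
      have h9 : rp hA w * r = rp hA w := hElub.2.1 _ hrw_mem
      rw [he'r] at h9; exact h9.symm
    have h10 := mul_rp_self hA w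
    rw [h8, mul_zero] at h10
    exact h10.symm
  have hp1r : p * (1 - r) = 1 - r := (hpann (1 - r)).mp (fun s hs => hM s (hSq s hs))
  have h1pr : (1 - p) * r = 1 - p := by
    have h6 : p - p * r = 1 - r := by
      calc p - p * r = p * (1 - r) := by noncomm_ring
        _ = 1 - r := hp1r
    set u := p * r with hu
    rw [sub_eq_iff_eq_add] at h6
    have h8 : (1 - p) * r = r - u := by rw [hu]; noncomm_ring
    rw [h8, h6]; abel
  have hfinal : f (1 - p) * q = 0 := by
    have h11 : f (1 - p) = f (1 - p) * f r := by
      conv_lhs => rw [← h1pr, hmul]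
    rw [h11, mul_assoc, hfrq, mul_zero]
  exact conclude_a f hadd hmul hone hstar hp hq hpann hqann hfinal

end ToA
end Impl
section Impl2
variable {A B : Type*} [CStarAlgebra A] [CStarAlgebra B]
variable (hA : AWStarAnnihilator A) (hB : AWStarAnnihilator B)
variable (f : A → B)
variable (hadd : ∀ a b : A, f (a + b) = f a + f b)
variable (hmul : ∀ a b : A, f (a * b) = f a * f b)
variable (hone : f 1 = 1) (hstar : ∀ a : A, f (star a) = star (f a))

include hA hB hadd hmul hone hstar in
lemma a_of_rp_pres_dir
    [PartialOrder A] [StarOrderedRing A]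
    (h4 : ∀ (P : Set A) (p : A), (∀ q ∈ P, IsProjElem q) →
      (∀ q ∈ P, ∀ r ∈ P, ∃ s ∈ P, q * s = q ∧ r * s = r) →
      IsProjLUB P p → IsProjLUB (f '' P) (f p))
    (hrp : ∀ s : A, f (rp hA s) = rp hB (f s)) :
    ∀ (S : Set A) (p : A) (q : B), IsProjElem p → IsProjElem q →
      (∀ x : A, (∀ s ∈ S, s * x = 0) ↔ p * x = x) →
      (∀ y : B, (∀ s ∈ S, f s * y = 0) ↔ q * y = y) →
      f p = q := by
  intro S p q hp hq hpann hqann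
  have hSq : ∀ s ∈ S, f s * q = 0 := (hqann q).mpr hq.1
  set M : Set A := {x | f x * q = 0} with hM_def
  have hSM : S ⊆ M := fun s hs => hSq s hs
  set D : Set A := rp hA '' M with hD_def
  set eM := annp hA M with heM_def
  have hDspec : ∀ y : A, (∀ t ∈ D, t * y = 0) ↔ eM * y = y := by
    intro y
    rw [← annp_spec hA M y]
    constructor
    · intro h x hx
      exact (rp_spec hA x y).mpr (h _ ⟨x, hx, rfl⟩)
    · rintro h t ⟨x, hx, rfl⟩
      exact (rp_spec hA x y).mp (h x hx)
  have hDproj : ∀ t ∈ D, IsProjElem t := by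
    rintro t ⟨x, hx, rfl⟩; exact rp_proj hA x
  set r : A := 1 - eM with hr_def
  have hDlub : IsProjLUB D r := isProjLUB_one_sub (annp_proj hA M) hDspec hDproj
  have hDmemq : ∀ t ∈ D, f t * q = 0 := by
    rintro t ⟨x, hx, rfl⟩
    rw [hrp x]
    exact (rp_spec hB (f x) q).mp hx
  have hDdir : ∀ q1 ∈ D, ∀ q2 ∈ D, ∃ s ∈ D, q1 * s = q1 ∧ q2 * s = q2 := by
    rintro q1 ⟨x, hx, rfl⟩ q2 ⟨y, hy, rfl⟩
    have hmem : (rp hA x + rp hA y) ∈ M := by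
      show f _ * q = 0
      rw [hadd, add_mul, hrp x, hrp y,
        (rp_spec hB (f x) q).mp hx, (rp_spec hB (f y) q).mp hy, add_zero]
    refine ⟨rp hA (rp hA x + rp hA y), ⟨_, hmem, rfl⟩, ?_, ?_⟩
    · exact mul_eq_self_of_mul_one_sub (proj_kills_of_le (rp_proj hA x)
        (le_add_of_nonneg_right (proj_nonneg (rp_proj hA y)))
        (mul_one_sub_rp hA (rp hA x + rp hA y)))
    · exact mul_eq_self_of_mul_one_sub (proj_kills_of_le (rp_proj hA y)
        (le_add_of_nonneg_left (proj_nonneg (rp_proj hA x)))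
        (mul_one_sub_rp hA (rp hA x + rp hA y)))
  have HB := h4 D r hDproj hDdir hDlub
  have hfrq : f r * q = 0 := by
    have h1 := HB.2.2 (1 - q) (proj_one_sub hq) (by
      rintro b ⟨t, ht, rfl⟩
      rw [mul_sub, mul_one, hDmemq t ht, sub_zero])
    rw [mul_sub, mul_one, sub_eq_self] at h1
    exact h1
  have heMp : p * eM = eM := (hpann eM).mp fun s hs => annp_kills hA (hSM hs)
  have h1pr : (1 - p) * r = 1 - p := by
    have h6 : (1 - p) * (1 - eM) = 1 - eM - p + p * eM := by noncomm_ring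
    rw [hr_def, h6, heMp]; abel
  have hfinal : f (1 - p) * q = 0 := by
    have h11 : f (1 - p) = f (1 - p) * f r := by
      conv_lhs => rw [← h1pr, hmul]
    rw [h11, mul_assoc, hfrq, mul_zero]
  exact conclude_a f hadd hmul hone hstar hp hq hpann hqann hfinal

include hA hB hadd hmul hone hstar in
lemma b_of_a
    (h1 : ∀ (S : Set A) (p : A) (q : B), IsProjElem p → IsProjElem q →
      (∀ x : A, (∀ s ∈ S, s * x = 0) ↔ p * x = x) →
      (∀ y : B, (∀ s ∈ S, f s * y = 0) ↔ q * y = y) →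
      f p = q) :
    ∀ (P : Set A) (p : A), (∀ q ∈ P, IsProjElem q) →
      IsProjLUB P p → IsProjLUB (f '' P) (f p) := by
  intro P p hPproj hlub
  set e := annp hA P with he_def
  have hlubA : IsProjLUB P (1 - e) :=
    isProjLUB_one_sub (annp_proj hA P) (annp_spec hA P) hPproj
  have hpe : p = 1 - e := isProjLUB_unique hlub hlubA
  set e' := annp hB (f '' P) with he'_def
  have hqann : ∀ y : B, (∀ s ∈ P, f s * y = 0) ↔ e' * y = y := by
    intro y
    rw [← annp_spec hB (f '' P) y]
    constructor
    · rintro h t ⟨x, hx, rfl⟩; exact h x hx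
    · intro h x hx; exact h _ ⟨x, hx, rfl⟩
  have hfe : f e = e' :=
    h1 P e e' (annp_proj hA P) (annp_proj hB _) (annp_spec hA P) hqann
  have himg : ∀ t ∈ f '' P, IsProjElem t := by
    rintro t ⟨x, hx, rfl⟩; exact f_proj f hmul hstar (hPproj x hx)
  have hlubB : IsProjLUB (f '' P) (1 - e') :=
    isProjLUB_one_sub (annp_proj hB _) (annp_spec hB _) himg
  have hfp : f p = 1 - e' := by rw [hpe, f_sub f hadd, hone, hfe]
  rw [hfp]
  exact hlubB

end Impl2


theorem awstar_morphism_tfae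
    {A B : Type*} [CStarAlgebra A] [CStarAlgebra B]
    (hA : AWStarAnnihilator A) (hB : AWStarAnnihilator B)
    (f : A → B)
    (hadd : ∀ a b : A, f (a + b) = f a + f b)
    (hmul : ∀ a b : A, f (a * b) = f a * f b)
    (hone : f 1 = 1)
    (hstar : ∀ a : A, f (star a) = star (f a)) :
    List.TFAE
      [ -- (a) `f` preserves right annihilating projections
        (∀ (S : Set A) (p : A) (q : B), IsProjElem p → IsProjElem q →
          (∀ x : A, (∀ s ∈ S, s * x = 0) ↔ p * x = x) →
          (∀ y : B, (∀ s ∈ S, f s * y = 0) ↔ q * y = y) →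
          f p = q),
        -- (b) `f` preserves suprema of arbitrary families of projections
        (∀ (P : Set A) (p : A), (∀ q ∈ P, IsProjElem q) →
          IsProjLUB P p → IsProjLUB (f '' P) (f p)),
        -- (c) `f` preserves suprema of orthogonal families of projections
        (∀ (P : Set A) (p : A), (∀ q ∈ P, IsProjElem q) →
          (∀ q ∈ P, ∀ r ∈ P, q ≠ r → q * r = 0) →
          IsProjLUB P p → IsProjLUB (f '' P) (f p)),
        -- (d) `f` preserves suprema of directed families of projections
        (∀ (P : Set A) (p : A), (∀ q ∈ P, IsProjElem q) →
          (∀ q ∈ P, ∀ r ∈ P, ∃ s ∈ P, q * s = q ∧ r * s = r) →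
          IsProjLUB P p → IsProjLUB (f '' P) (f p)) ] := by
  letI : PartialOrder A := CStarAlgebra.spectralOrder A
  haveI : StarOrderedRing A := CStarAlgebra.spectralOrderedRing A
  tfae_have 1 → 2 := b_of_a hA hB f hadd hmul hone hstar
  tfae_have 2 → 3 := fun h2 P p hPp _ hl => h2 P p hPp hl
  tfae_have 2 → 4 := fun h2 P p hPp _ hl => h2 P p hPp hl
  tfae_have 3 → 1 := fun h3 =>
    a_of_rp_pres_orth hA hB f hadd hmul hone hstar h3
      (rp_pres_of_orth hA hB f hmul hstar h3)
  tfae_have 4 → 1 := fun h4 =>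
    a_of_rp_pres_dir hA hB f hadd hmul hone hstar h4
      (rp_pres_of_dir hA hB f hmul hstar h4)
  tfae_finish
end

section
/- Let P be a bounded lattice equipped with an orthocomplementation, i.e., a map x ↦ xᗮ satisfying xᗮᗮ = x, x ≤ y → yᗮ ≤ xᗮ, x ⊔ xᗮ = ⊤, and x ⊓ xᗮ = ⊥, and suppose P is orthomodular: x ≤ y implies x ⊔ (xᗮ ⊓ y) = y. If every subset of P whose elements are pairwise orthogonal (x ≤ yᗮ for all distinct x, y in the subset) has a least upper bound in P, then every subset of P has a least upper bound; hence P is a complete lattice. -/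
theorem orthomodular_complete_of_orthogonal_sups
    {P : Type*} [Lattice P] [BoundedOrder P]
    (perp : P → P)
    (hinv : ∀ x, perp (perp x) = x)
    (hmono : ∀ x y : P, x ≤ y → perp y ≤ perp x)
    (hsup : ∀ x : P, x ⊔ perp x = ⊤)
    (hinf : ∀ x : P, x ⊓ perp x = ⊥)
    (horthomodular : ∀ x y : P, x ≤ y → x ⊔ (perp x ⊓ y) = y)
    (horth : ∀ S : Set P,
      (∀ x ∈ S, ∀ y ∈ S, x ≠ y → x ≤ perp y) → ∃ p, IsLUB S p) :
    ∀ S : Set P, ∃ p, IsLUB S p := by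
  intro S
  -- collection of pairwise orthogonal subsets of the lower bounds of upper bounds of S
  set C : Set (Set P) :=
    {T | T ⊆ lowerBounds (upperBounds S) ∧
      ∀ x ∈ T, ∀ y ∈ T, x ≠ y → x ≤ perp y} with hC
  obtain ⟨T, hTmax⟩ := zorn_subset C (by
    intro c hcC hchain
    refine ⟨⋃₀ c, ⟨?_, ?_⟩, fun s hs => Set.subset_sUnion_of_mem hs⟩
    · intro x hx
      obtain ⟨t, htc, hxt⟩ := hx
      exact (hcC htc).1 hxt
    · rintro x ⟨t1, ht1, hx1⟩ y ⟨t2, ht2, hy2⟩ hxy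
      rcases hchain.total ht1 ht2 with h | h
      · exact (hcC ht2).2 x (h hx1) y hy2 hxy
      · exact (hcC ht1).2 x hx1 y (h hy2) hxy)
  have hTC : T ∈ C := hTmax.prop
  obtain ⟨p, hp⟩ := horth T hTC.2
  have hplow : p ∈ lowerBounds (upperBounds S) := by
    intro u hu
    exact hp.2 (fun t ht => hTC.1 ht hu)
  have hpub : p ∈ upperBounds S := by
    by_contra hnot
    obtain ⟨s, hs, hsp⟩ : ∃ s ∈ S, ¬ s ≤ p := by
      simpa [upperBounds, Set.mem_setOf_eq] using hnot
    set c := perp p ⊓ (s ⊔ p) with hcdef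
    have hom : p ⊔ c = s ⊔ p := horthomodular p (s ⊔ p) le_sup_right
    have hcbot : c ≠ ⊥ := by
      intro h
      rw [h, sup_bot_eq] at hom
      exact hsp (by rw [hom]; exact le_sup_left)
    have hclow : c ∈ lowerBounds (upperBounds S) := by
      intro u hu
      exact inf_le_right.trans (sup_le (hu hs) (hplow hu))
    have hcperp : c ≤ perp p := inf_le_left
    have hnew : insert c T ∈ C := by
      constructor
      · intro x hx
        rcases hx with rfl | hx
        · exact hclow
        · exact hTC.1 hx
      · intro x hx y hy hxy
        rcases hx with rfl | hx
        · rcases hy with rfl | hy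
          · exact absurd rfl hxy
          · exact hcperp.trans (hmono _ _ (hp.1 hy))
        · rcases hy with rfl | hy
          · have : p ≤ perp c := by
              have := hmono _ _ hcperp
              rwa [hinv] at this
            exact (hp.1 hx).trans this
          · exact hTC.2 x hx y hy hxy
    have hcT : c ∈ T := hTmax.2 hnew (Set.subset_insert c T) (Set.mem_insert c T)
    have : c ≤ p ⊓ perp p := le_inf (hp.1 hcT) hcperp
    rw [hinf] at this
    exact hcbot (le_bot_iff.mp this)
  exact ⟨p, hpub, fun u hu => hplow hu⟩
end

section
/- Let P and Q be complete lattices, each equipped with an orthocomplementation (an order-reversing involution x ↦ xᗮ with x ⊔ xᗮ = ⊤ and x ⊓ xᗮ = ⊥) and each orthomodular (x ≤ y implies x ⊔ (xᗮ ⊓ y) = y). Let f : P → Q be a function that preserves orthocomplements (f(xᗮ) = f(x)ᗮ), preserves binary joins (f(x ⊔ y) = f(x) ⊔ f(y)), and preserves suprema of orthogonal subsets (f(sSup S) = sSup (f '' S) whenever the elements of S ⊆ P are pairwise orthogonal). Then f preserves arbitrary suprema: f(sSup S) = sSup (f '' S) for every subset S ⊆ P. -/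
theorem orthomodular_map_preserves_sups
    {P Q : Type*} [CompleteLattice P] [CompleteLattice Q]
    (perpP : P → P) (perpQ : Q → Q)
    (hinvP : ∀ x, perpP (perpP x) = x)
    (hmonoP : ∀ x y : P, x ≤ y → perpP y ≤ perpP x)
    (hsupP : ∀ x : P, x ⊔ perpP x = ⊤)
    (hinfP : ∀ x : P, x ⊓ perpP x = ⊥)
    (homP : ∀ x y : P, x ≤ y → x ⊔ (perpP x ⊓ y) = y)
    (hinvQ : ∀ x, perpQ (perpQ x) = x)
    (hmonoQ : ∀ x y : Q, x ≤ y → perpQ y ≤ perpQ x)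
    (hsupQ : ∀ x : Q, x ⊔ perpQ x = ⊤)
    (hinfQ : ∀ x : Q, x ⊓ perpQ x = ⊥)
    (homQ : ∀ x y : Q, x ≤ y → x ⊔ (perpQ x ⊓ y) = y)
    (f : P → Q)
    (hperp : ∀ x, f (perpP x) = perpQ (f x))
    (hjoin : ∀ x y : P, f (x ⊔ y) = f x ⊔ f y)
    (horth : ∀ S : Set P, (∀ x ∈ S, ∀ y ∈ S, x ≠ y → x ≤ perpP y) →
      f (sSup S) = sSup (f '' S)) :
    ∀ S : Set P, f (sSup S) = sSup (f '' S) := by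
  intro S
  classical
  set u := sSup (f '' S) with hu
  have fmono : ∀ a b : P, a ≤ b → f a ≤ f b := by
    intro a b hab
    have h : f b = f a ⊔ f b := by rw [← hjoin, sup_eq_right.mpr hab]
    rw [h]; exact le_sup_left
  let r : S → S → Prop := WellOrderingRel
  have hwo : IsWellOrder S r := WellOrderingRel.isWellOrder
  have htrans : ∀ {a b c : S}, r a b → r b c → r a c :=
    fun h1 h2 => trans_of r h1 h2
  have htri : ∀ a b : S, a ≠ b → r a b ∨ r b a := by
    intro a b hne
    rcases trichotomous_of r a b with h | h | h
    · exact Or.inl h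
    · exact absurd h hne
    · exact Or.inr h
  let ylt : S → P := fun a => sSup (Subtype.val '' {b | r b a})
  let y : S → P := fun a => sSup (Subtype.val '' {b | r b a ∨ b = a})
  let d : S → P := fun a => perpP (ylt a) ⊓ y a
  have h1 : ∀ a, ylt a ≤ y a := by
    intro a
    exact sSup_le_sSup (Set.image_mono (fun c hc => Or.inl hc))
  have h2 : ∀ a b, r a b → y a ≤ ylt b := by
    intro a b hab
    refine sSup_le_sSup (Set.image_mono ?_)
    rintro c (hc | rfl)
    · exact htrans hc hab
    · exact hab
  have hdy : ∀ a, d a ≤ y a := fun a => inf_le_right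
  have h3 : ∀ a, ylt a ⊔ d a = y a := fun a => homP _ _ (h1 a)
  have h4 : ∀ a, y a = ylt a ⊔ (a : P) := by
    intro a
    have hset : {b | r b a ∨ b = a} = {b | r b a} ∪ {a} := by
      ext b; simp [Set.mem_union, Set.mem_singleton_iff, or_comm]
    show sSup (Subtype.val '' {b | r b a ∨ b = a}) = _
    rw [hset, Set.image_union, sSup_union, Set.image_singleton, sSup_singleton]
  have h5 : ∀ a b : S, a ≠ b → d a ≤ perpP (d b) := by
    intro a b hne
    rcases htri a b hne with h | h
    · have hda : d a ≤ ylt b := le_trans (hdy a) (h2 a b h)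
      have hdb : d b ≤ perpP (ylt b) := inf_le_left
      have := hmonoP _ _ hdb
      rw [hinvP] at this
      exact le_trans hda this
    · have hdb : d b ≤ ylt a := le_trans (hdy b) (h2 b a h)
      have := hmonoP _ _ hdb
      exact le_trans (inf_le_left : d a ≤ perpP (ylt a)) this
  have h6 : ∀ T : Set S, ∀ x ∈ d '' T, ∀ z ∈ d '' T, x ≠ z → x ≤ perpP z := by
    rintro T x ⟨a, _, rfl⟩ z ⟨b, _, rfl⟩ hne
    exact h5 a b (fun hab => hne (by rw [hab]))
  have h7 : ∀ a, y a ≤ sSup (d '' {c | r c a ∨ c = a}) := by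
    intro a
    induction a using IsWellFounded.induction r with
    | _ a IH =>
      rw [← h3 a]
      apply sup_le
      · refine sSup_le ?_
        rintro p ⟨b, hb, rfl⟩
        have hby : (b : P) ≤ y b := le_sSup ⟨b, Or.inr rfl, rfl⟩
        refine le_trans (le_trans hby (IH b hb)) (sSup_le_sSup (Set.image_mono ?_))
        rintro c (hc | rfl)
        · exact Or.inl (htrans hc hb)
        · exact Or.inl hb
      · exact le_sSup ⟨a, Or.inr rfl, rfl⟩
  have h8 : ∀ a, ylt a = sSup (d '' {b | r b a}) := by
    intro a
    apply le_antisymm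
    · refine sSup_le ?_
      rintro p ⟨b, hb, rfl⟩
      have hby : (b : P) ≤ y b := le_sSup ⟨b, Or.inr rfl, rfl⟩
      refine le_trans (le_trans hby (h7 b)) (sSup_le_sSup (Set.image_mono ?_))
      rintro c (hc | rfl)
      · exact htrans hc hb
      · exact hb
    · refine sSup_le ?_
      rintro p ⟨b, hb, rfl⟩
      exact le_trans (hdy b) (h2 b a hb)
  have h9 : ∀ a, f (y a) ≤ u := by
    intro a
    induction a using IsWellFounded.induction r with
    | _ a IH =>
      rw [h4 a, hjoin]
      apply sup_le
      · rw [h8 a, horth _ (h6 _)]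
        refine sSup_le ?_
        rintro q ⟨p, ⟨b, hb, rfl⟩, rfl⟩
        exact le_trans (fmono _ _ (hdy b)) (IH b hb)
      · exact le_sSup ⟨(a : P), a.2, rfl⟩
  have hSd : sSup S = sSup (d '' Set.univ) := by
    apply le_antisymm
    · refine sSup_le ?_
      intro x hx
      have hxy : x ≤ y ⟨x, hx⟩ := le_sSup ⟨⟨x, hx⟩, Or.inr rfl, rfl⟩
      refine le_trans (le_trans hxy (h7 ⟨x, hx⟩)) (sSup_le_sSup (Set.image_mono ?_))
      exact fun c _ => Set.mem_univ c
    · refine sSup_le ?_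
      rintro p ⟨a, _, rfl⟩
      refine le_trans (hdy a) (sSup_le ?_)
      rintro p ⟨b, _, rfl⟩
      exact le_sSup b.2
  apply le_antisymm
  · rw [hSd, horth _ (h6 _)]
    refine sSup_le ?_
    rintro q ⟨p, ⟨a, _, rfl⟩, rfl⟩
    exact le_trans (fmono _ _ (hdy a)) (h9 a)
  · refine sSup_le ?_
    rintro q ⟨x, hx, rfl⟩
    exact fmono _ _ (le_sSup hx)
end

section
/- Let A and B be unital C*-algebras over ℂ and let f : A → B be a unital *-ring homomorphism (additive, multiplicative, f(1) = 1, f(a*) = f(a)*, but not assumed ℂ-linear). Then there exists a unique function g : A → B such that: g is ℂ-linear; g(a*) = g(a)* for all a ∈ A; g(a²) = g(a)² for all a ∈ A (so g is a Jordan *-homomorphism); and g(a) = f(a) for every self-adjoint a ∈ A. -/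
open ComplexStarModule Complex

/-- A unital `*`-ring homomorphism between C*-algebras agrees on self-adjoint
elements with a unique Jordan `*`-homomorphism. -/
theorem jordan_star_hom_of_star_ring_hom
    {A B : Type*} [CStarAlgebra A] [CStarAlgebra B]
    (f : A → B)
    (hadd : ∀ a b : A, f (a + b) = f a + f b)
    (hmul : ∀ a b : A, f (a * b) = f a * f b)
    (hone : f 1 = 1)
    (hstar : ∀ a : A, f (star a) = star (f a)) :
    ∃! g : A →ₗ[ℂ] B,
      (∀ a : A, g (star a) = star (g a)) ∧
      (∀ a : A, g (a ^ 2) = (g a) ^ 2) ∧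
      (∀ a : A, IsSelfAdjoint a → g a = f a) := by
  letI := CStarAlgebra.spectralOrder A
  haveI := CStarAlgebra.spectralOrderedRing A
  letI := CStarAlgebra.spectralOrder B
  haveI := CStarAlgebra.spectralOrderedRing B
  -- scalar multiplication by nonneg reals preserves nonnegativity
  have hsmulpos : ∀ (t : ℝ) (a : A), 0 ≤ t → 0 ≤ a → 0 ≤ t • a := by
    intro t a ht ha
    have hs : IsSelfAdjoint (CFC.sqrt a) := (CFC.sqrt_nonneg (a := a)).isSelfAdjoint
    have : t • a = star (Real.sqrt t • CFC.sqrt a) * (Real.sqrt t • CFC.sqrt a) := by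
      rw [star_smul, star_trivial, hs.star_eq, smul_mul_smul_comm,
        Real.mul_self_sqrt ht, CFC.sqrt_mul_sqrt_self a ha]
    rw [this]
    exact star_mul_self_nonneg _
  -- basic additive facts
  have hzero : f 0 = 0 := by simpa using (hadd 0 0).symm
  have hneg : ∀ a : A, f (-a) = - f a := by
    intro a
    have h := hadd a (-a)
    rw [add_neg_cancel, hzero] at h
    exact eq_neg_of_add_eq_zero_right h.symm
  have hsub : ∀ a b : A, f (a - b) = f a - f b := by
    intro a b
    rw [sub_eq_add_neg, hadd, hneg, sub_eq_add_neg]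
  -- f preserves nonnegativity
  have hpos : ∀ a : A, 0 ≤ a → 0 ≤ f a := by
    intro a ha
    have h1 : a = star (CFC.sqrt a) * CFC.sqrt a := by
      conv_lhs => rw [← CFC.sqrt_mul_sqrt_self a ha]
      rw [(CFC.sqrt_nonneg (a := a)).isSelfAdjoint.star_eq]
    rw [h1, hmul, hstar]
    exact star_mul_self_nonneg _
  have hmono : ∀ a b : A, a ≤ b → f a ≤ f b := by
    intro a b hab
    have h := hpos _ (sub_nonneg.mpr hab)
    rw [hsub] at h
    exact sub_nonneg.mp h
  -- ℕ-smul
  have hnat : ∀ (n : ℕ) (a : A), f (n • a) = n • f a := by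
    intro n a
    induction n with
    | zero => simpa using hzero
    | succ n ih => rw [succ_nsmul, hadd, ih, succ_nsmul]
  have hint : ∀ (m : ℤ) (a : A), f (m • a) = m • f a := by
    intro m a
    cases m with
    | ofNat n => simpa using hnat n a
    | negSucc n => rw [negSucc_zsmul, negSucc_zsmul, hneg, hnat]
  -- ℚ-smul (as real scalars)
  have hrat : ∀ (q : ℚ) (a : A), f ((q : ℝ) • a) = (q : ℝ) • f a := by
    intro q a
    have hd : ((q.den : ℝ)) ≠ 0 := by exact_mod_cast q.den_nz
    have hqd : (q.den : ℝ) * (q : ℝ) = (q.num : ℝ) := by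
      rw [mul_comm]; exact_mod_cast congrArg (Rat.cast : ℚ → ℝ) (Rat.mul_den_eq_num q)
    apply smul_right_injective B hd
    calc (q.den : ℝ) • f ((q : ℝ) • a)
        = (q.den : ℕ) • f ((q : ℝ) • a) := by rw [Nat.cast_smul_eq_nsmul]
      _ = f ((q.den : ℕ) • ((q : ℝ) • a)) := (hnat _ _).symm
      _ = f ((q.den : ℝ) • ((q : ℝ) • a)) := by rw [Nat.cast_smul_eq_nsmul]
      _ = f (((q.num : ℤ) : ℝ) • a) := by rw [smul_smul, hqd]
      _ = f ((q.num : ℤ) • a) := by rw [Int.cast_smul_eq_zsmul]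
      _ = (q.num : ℤ) • f a := hint _ _
      _ = ((q.num : ℝ)) • f a := by rw [Int.cast_smul_eq_zsmul]
      _ = (q.den : ℝ) • ((q : ℝ) • f a) := by rw [smul_smul, hqd]
  -- ℝ-smul on nonnegative elements
  have hrealpos : ∀ (t : ℝ) (a : A), 0 ≤ a → f (t • a) = t • f a := by
    intro t a ha
    have hfa : 0 ≤ f a := hpos a ha
    have key : ∀ ε : ℝ, 0 < ε → ‖f (t • a) - t • f a‖ ≤ 0 + ε := by
      intro ε hε
      set C : ℝ := ‖f a‖ + 1 with hC
      have hC0 : 0 < C := by positivity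
      have hfaC : ‖f a‖ ≤ C := by simp [hC]
      set δ : ℝ := ε / (3 * C) with hδ
      have hδ0 : 0 < δ := by positivity
      obtain ⟨q, hq1, hq2⟩ := exists_rat_btwn (show t - δ < t by linarith)
      obtain ⟨q', hq'1, hq'2⟩ := exists_rat_btwn (show t < t + δ by linarith)
      -- sandwich : 0 ≤ f (t•a) - q • f a ≤ (q' - q) • f a
      have h1 : (0 : B) ≤ f (t • a) - (q : ℝ) • f a := by
        rw [← hrat, ← hsub, ← sub_smul]
        exact hpos _ (hsmulpos _ _ (by linarith) ha)
      have h2 : f (t • a) - (q : ℝ) • f a ≤ ((q' - q : ℚ) : ℝ) • f a := by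
        rw [← hrat, ← hsub, ← sub_smul, ← hrat]
        exact hmono _ _ (by
          rw [← sub_nonneg, ← sub_smul]
          exact hsmulpos _ _ (by push_cast; linarith) ha)
      have h3 : ‖f (t • a) - (q : ℝ) • f a‖ ≤ ((q' - q : ℚ) : ℝ) * ‖f a‖ := by
        refine le_trans (CStarAlgebra.norm_le_norm_of_nonneg_of_le h1 h2) ?_
        rw [norm_smul, Real.norm_eq_abs, _root_.abs_of_nonneg (by push_cast; linarith)]
      have h4 : ‖f (t • a) - t • f a‖
          ≤ ‖f (t • a) - (q : ℝ) • f a‖ + ‖((q : ℝ) - t) • f a‖ := by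
        have : f (t • a) - t • f a
            = (f (t • a) - (q : ℝ) • f a) + ((q : ℝ) - t) • f a := by
          rw [sub_smul]; abel
        rw [this]
        exact norm_add_le _ _
      have h5 : ‖((q : ℝ) - t) • f a‖ ≤ δ * ‖f a‖ := by
        rw [norm_smul, Real.norm_eq_abs]
        apply mul_le_mul_of_nonneg_right _ (norm_nonneg _)
        rw [abs_le]
        constructor <;> linarith
      have hq'q : ((q' - q : ℚ) : ℝ) ≤ 2 * δ := by push_cast; linarith
      have : ‖f (t • a) - t • f a‖ ≤ 2 * δ * ‖f a‖ + δ * ‖f a‖ := by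
        refine le_trans h4 (add_le_add (le_trans h3 ?_) h5)
        exact mul_le_mul_of_nonneg_right hq'q (norm_nonneg _)
      have hfin : 3 * δ * ‖f a‖ ≤ ε := by
        have : 3 * δ * ‖f a‖ ≤ 3 * δ * C :=
          mul_le_mul_of_nonneg_left hfaC (by positivity)
        have hδC : 3 * δ * C = ε := by
          rw [hδ]; field_simp
        linarith
      linarith
    have := le_of_forall_pos_le_add key
    rw [← sub_eq_zero]
    exact norm_le_zero_iff.mp (by linarith [norm_nonneg (f (t • a) - t • f a)])
  -- ℝ-smul on self-adjoint elements
  have hrealSA : ∀ (t : ℝ) (a : A), IsSelfAdjoint a → f (t • a) = t • f a := by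
    intro t a ha
    have hdecomp : a = a⁺ - a⁻ := (CFC.posPart_sub_negPart a ha).symm
    rw [hdecomp, smul_sub, hsub, hsub, hrealpos t _ (CFC.posPart_nonneg a),
      hrealpos t _ (CFC.negPart_nonneg a), smul_sub]
  -- star of f on self-adjoint images
  have hfsa : ∀ a : A, IsSelfAdjoint a → IsSelfAdjoint (f a) := by
    intro a ha
    rw [IsSelfAdjoint, ← hstar, ha.star_eq]
  -- the candidate map
  set g0 : A → B := fun a => f (ℜ a : A) + I • f (ℑ a : A) with hg0
  have hg0add : ∀ a b : A, g0 (a + b) = g0 a + g0 b := by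
    intro a b
    simp only [hg0, map_add, AddSubgroup.coe_add, hadd, smul_add]
    abel
  have hg0smul : ∀ (z : ℂ) (a : A), g0 (z • a) = z • g0 a := by
    intro z a
    have h1 : (ℜ (z • a) : A) = z.re • (ℜ a : A) - z.im • (ℑ a : A) := by
      rw [realPart_smul]; simp
    have h2 : (ℑ (z • a) : A) = z.re • (ℑ a : A) + z.im • (ℜ a : A) := by
      rw [imaginaryPart_smul]; simp
    simp only [hg0, h1, h2, hsub, hadd,
      hrealSA _ _ (ℜ a).2, hrealSA _ _ (ℑ a).2]
    match_scalars <;> simp [Complex.ext_iff] <;> ring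
  set g : A →ₗ[ℂ] B :=
    { toFun := g0, map_add' := hg0add, map_smul' := hg0smul } with hgdef
  have hgapply : ∀ a : A, g a = f (ℜ a : A) + I • f (ℑ a : A) := fun a => rfl
  -- g on a decomposition x + I • y with x, y self-adjoint
  have hdec : ∀ x y : A, IsSelfAdjoint x → IsSelfAdjoint y →
      g (x + I • y) = f x + I • f y := by
    intro x y hx hy
    have hre : (ℜ (x + I • y) : A) = x := by
      rw [map_add, realPart_I_smul]
      simp [hx.coe_realPart, hy.imaginaryPart]
    have him : (ℑ (x + I • y) : A) = y := by
      rw [map_add, imaginaryPart_I_smul]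
      simp [hx.imaginaryPart, hy.coe_realPart]
    rw [hgapply, hre, him]
  -- self-adjoint agreement
  have hgsa : ∀ a : A, IsSelfAdjoint a → g a = f a := by
    intro a ha
    rw [hgapply, ha.coe_realPart, ha.imaginaryPart]
    simp [hzero]
  -- star property
  have hgstar : ∀ a : A, g (star a) = star (g a) := by
    intro a
    have hsa : star a = (ℜ a : A) + I • (-(ℑ a : A)) := by
      conv_lhs => rw [← realPart_add_I_smul_imaginaryPart a]
      rw [star_add, (ℜ a).2.star_eq, star_smul, (ℑ a).2.star_eq]
      simp
    rw [hsa, hdec _ _ (ℜ a).2 (ℑ a).2.neg, hgapply, star_add, star_smul,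
      (hfsa _ (ℜ a).2).star_eq, (hfsa _ (ℑ a).2).star_eq, hneg]
    simp
  -- square property
  have hgsq : ∀ a : A, g (a ^ 2) = (g a) ^ 2 := by
    intro a
    set x : A := (ℜ a : A)
    set y : A := (ℑ a : A)
    have hx : IsSelfAdjoint x := (ℜ a).2
    have hy : IsSelfAdjoint y := (ℑ a).2
    have hsq : a ^ 2 = (x * x - y * y) + I • (x * y + y * x) := by
      conv_lhs => rw [← realPart_add_I_smul_imaginaryPart a]
      simp only [sq, mul_add, add_mul, mul_smul_comm, smul_mul_assoc,
        smul_smul, Complex.I_mul_I, neg_one_smul, smul_add]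
      abel
    have hx2 : IsSelfAdjoint (x * x - y * y) := by
      rw [IsSelfAdjoint, star_sub, star_mul, star_mul, hx.star_eq, hy.star_eq]
    have hy2 : IsSelfAdjoint (x * y + y * x) := by
      rw [IsSelfAdjoint, star_add, star_mul, star_mul, hx.star_eq, hy.star_eq,
        add_comm]
    rw [hsq, hdec _ _ hx2 hy2, hsub, hadd, hmul, hmul, hmul, hmul]
    have : g a = f x + I • f y := by
      conv_lhs => rw [show a = x + I • y from (realPart_add_I_smul_imaginaryPart a).symm]
      exact hdec _ _ hx hy
    rw [this]
    simp only [sq, mul_add, add_mul, mul_smul_comm, smul_mul_assoc,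
      smul_smul, Complex.I_mul_I, neg_one_smul, smul_add]
    abel
  refine ⟨g, ⟨hgstar, hgsq, hgsa⟩, ?_⟩
  intro g' ⟨_, _, h3⟩
  ext a
  conv_lhs => rw [show a = (ℜ a : A) + I • (ℑ a : A) from
    (realPart_add_I_smul_imaginaryPart a).symm]
  rw [map_add, map_smul, h3 _ (ℜ a).2, h3 _ (ℑ a).2, hgapply]
end

section
/- Let X be an extremally disconnected compact Hausdorff topological space and let b : X → ℝ be continuous. Then there exists a continuous function u : X → ℝ with u(x)² = 1 for all x ∈ X (i.e., u is a self-adjoint unitary, a symmetry, in C(X,ℝ)) such that b = u · |b|, where |b| denotes the pointwise absolute value of b, which is the unique nonnegative continuous square root of b². -/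
/-- On an extremally disconnected compact Hausdorff space, every continuous
real-valued function `b` factors as `b = u * |b|` for a continuous symmetry
`u` (a function with `u x ^ 2 = 1` everywhere). -/
theorem exists_symmetry_mul_abs
    {X : Type*} [TopologicalSpace X] [CompactSpace X] [T2Space X]
    [ExtremallyDisconnected X]
    (b : C(X, ℝ)) :
    ∃ u : C(X, ℝ), (∀ x : X, u x ^ 2 = 1) ∧ ∀ x : X, b x = u x * |b x| := by
  classical
  set C : Set X := closure {x | 0 < b x} with hCdef
  have hopen : IsOpen C :=
    ExtremallyDisconnected.open_closure _ (isOpen_lt continuous_const b.continuous)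
  have hfront : frontier C = ∅ := IsClopen.frontier_eq ⟨isClosed_closure, hopen⟩
  have hcont : Continuous fun x => if x ∈ C then (1 : ℝ) else -1 := by
    refine continuous_if ?_ continuous_const.continuousOn continuous_const.continuousOn
    intro a ha
    exact absurd ((by simp : frontier {x | x ∈ C} = frontier C) ▸ ha)
      (hfront ▸ Set.notMem_empty a)
  refine ⟨⟨fun x => if x ∈ C then (1 : ℝ) else -1, hcont⟩, ?_, ?_⟩
  · intro x
    by_cases h : x ∈ C <;> simp [h]
  · intro x
    simp only [ContinuousMap.coe_mk]
    rcases lt_trichotomy (b x) 0 with h | h | h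
    · have hx : x ∉ C := by
        intro hx
        have : x ∈ closure {y | b y < 0} := subset_closure h
        have hdisj : {y | 0 < b y} ∩ {y | b y < 0} = ∅ := by
          ext y; simp only [Set.mem_inter_iff, Set.mem_setOf_eq, Set.mem_empty_iff_false,
            iff_false, not_and]
          intro h1 h2; exact absurd h1 (not_lt.mpr h2.le)
        have := mem_closure_iff.mp hx _ (isOpen_lt b.continuous continuous_const) h
        rcases this with ⟨y, hy1, hy2⟩
        exact absurd hy2 (by simp only [Set.mem_setOf_eq]; exact not_lt.mpr hy1.le)
      rw [if_neg hx, abs_of_neg h]; ring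
    · by_cases hx : x ∈ C <;> simp [hx, h]
    · have hx : x ∈ C := subset_closure h
      rw [if_pos hx, abs_of_pos h]; ring
end

section
/- Let X be an extremally disconnected compact Hausdorff topological space and let n ≥ 2 be a natural number. In the group of unitary n×n matrices over C(X,ℂ), the subgroup generated by the set of self-adjoint unitary matrices (symmetries) is exactly the set of unitary matrices u with (det u)² = 1. -/
set_option linter.unusedSectionVars false
set_option linter.unusedVariables false

open Matrix Complex ComplexConjugate Set

namespace SymGen


variable {X : Type*} [TopologicalSpace X] [CompactSpace X] [T2Space X]
  [ExtremallyDisconnected X]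

/-- dense union -/
lemma dense_union_compl_closure {Ω : Set X} (hΩ : IsOpen Ω) :
    Dense (Ω ∪ (closure Ω)ᶜ) := by
  intro x
  rcases em (x ∈ closure Ω) with h | h
  · exact closure_mono subset_union_left h
  · exact subset_closure (Or.inr h)

/-- Extension of compact-valued maps from dense open sets on Stonean spaces. -/
lemma exists_extension_of_denseOpen {M : Type} [TopologicalSpace M] [T2Space M]
    {D : Set X} (hDo : IsOpen D) (hDd : Dense D) {f : X → M} {K : Set M}
    (hK : IsCompact K) (hfc : ContinuousOn f D) (hfK : ∀ x ∈ D, f x ∈ K) :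
    ∃ F : X → M, Continuous F ∧ (∀ x, F x ∈ K) ∧ ∀ x ∈ D, F x = f x := by
  have hKcl : IsClosed K := hK.isClosed
  set G : Set (X × M) := (fun x => (x, f x)) '' D with hG
  set Γ : Set (X × M) := closure G with hΓ
  have hGsub : G ⊆ univ ×ˢ K := by
    rintro p ⟨x, hx, rfl⟩; exact ⟨trivial, hfK x hx⟩
  have hΓsub : Γ ⊆ univ ×ˢ K :=
    closure_minimal hGsub (isClosed_univ.prod hKcl)
  have hΓcomp : IsCompact Γ :=
    IsCompact.of_isClosed_subset (isCompact_univ.prod hK) isClosed_closure hΓsub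
  haveI : CompactSpace Γ := isCompact_iff_compactSpace.mp hΓcomp
  -- the projection
  have hsurj : Function.Surjective (fun p : Γ => (p : X × M).1) := by
    intro x
    have hx : x ∈ Prod.fst '' Γ := by
      have hclosed : IsClosed (Prod.fst '' Γ) :=
        (hΓcomp.image continuous_fst).isClosed
      have hD : D ⊆ Prod.fst '' Γ := by
        intro y hy
        exact ⟨(y, f y), subset_closure ⟨y, hy, rfl⟩, rfl⟩
      have := hclosed.closure_subset_iff.mpr hD
      exact this (hDd x)
    rcases hx with ⟨p, hp, hpx⟩
    exact ⟨⟨p, hp⟩, hpx⟩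
  obtain ⟨h, hcont, hcomm⟩ := CompactT2.ExtremallyDisconnected.projective
    (Y := Γ) (Z := X) (f := id) (g := fun p : Γ => (p : X × M).1)
    continuous_id (continuous_fst.comp continuous_subtype_val) hsurj
  refine ⟨fun x => ((h x : X × M)).2,
    continuous_snd.comp (continuous_subtype_val.comp hcont), ?_, ?_⟩
  · intro x
    exact (hΓsub (h x).2).2
  · intro x hxD
    have hfst : ((h x : X × M)).1 = x := congrFun hcomm x
    -- any point of Γ with first coordinate in D lies on the graph
    have key : ∀ p : X × M, p ∈ Γ → p.1 ∈ D → p.2 = f p.1 := by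
      intro p hpΓ hpD
      by_contra hne
      obtain ⟨V₁, V₂, hV₁, hV₂, hpV₁, hfV₂, hdisj⟩ := t2_separation hne
      have hcAt : ContinuousAt f p.1 := hfc.continuousAt (hDo.mem_nhds hpD)
      have hU : {y | y ∈ D ∧ f y ∈ V₂} ∈ nhds p.1 := by
        apply Filter.inter_mem (hDo.mem_nhds hpD)
        exact hcAt.preimage_mem_nhds (hV₂.mem_nhds hfV₂)
      obtain ⟨U, hUsub, hUo, hpU⟩ := mem_nhds_iff.mp hU
      have hnhds : U ×ˢ V₁ ∈ nhds p := by
        exact (hUo.prod hV₁).mem_nhds ⟨hpU, hpV₁⟩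
      obtain ⟨q, hqUV, hqG⟩ :=
        mem_closure_iff_nhds.mp hpΓ _ hnhds
      rcases hqG with ⟨y, _, rfl⟩
      have h2 : f y ∈ V₂ := (hUsub hqUV.1).2
      exact absurd (hdisj.ne_of_mem hqUV.2 h2) (fun hh => hh rfl)
    have hmem : ((h x : X × M)).1 ∈ D := by rw [hfst]; exact hxD
    have := key _ (h x).2 hmem
    simp only [this, hfst]




variable {R : Type*} [CommRing R] [StarRing R] {n : ℕ}

lemma star_eq_self_of_sq {a : R} (ha : a * star a = 1) (ha2 : a * a = 1) :
    star a = a := by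
  have : star a = star a * (a * star a) := by rw [ha, mul_one]
  calc star a = star a * (a * a) := by rw [ha2, mul_one]
    _ = (star a * a) * a := by ring
    _ = a := by rw [mul_comm (star a) a, ha, one_mul]

lemma stdBasis_conjTranspose (i j : Fin n) (a : R) :
    (single i j a)ᴴ = single j i (star a) := by
  ext k l
  simp only [conjTranspose_apply, single, of_apply]
  rw [apply_ite star, star_zero]
  congr 1
  simp [and_comm]


lemma mulE {i j k l : Fin n} (h : j ≠ k) (c d : R) :
    single i j c * single k l d = (0 : Matrix (Fin n) (Fin n) R) :=
  single_mul_single_of_ne _ _ _ _ h _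

/-- The symmetry with `a` in position `(i,j)`, `star a` in `(j,i)`, ones on the rest
of the diagonal. -/
def swM (i j : Fin n) (a : R) : Matrix (Fin n) (Fin n) R :=
  1 - single i i 1 - single j j 1 + single i j a
    + single j i (star a)

/-- The diagonal matrix with `a` at `i`, `star a` at `j`, ones elsewhere. -/
def pairD (i j : Fin n) (a : R) : Matrix (Fin n) (Fin n) R :=
  Matrix.diagonal (fun t => if t = i then a else if t = j then star a else 1)

lemma swM_conjTranspose (i j : Fin n) (a : R) : (swM i j a)ᴴ = swM i j a := by
  simp only [swM, conjTranspose_add, conjTranspose_sub, conjTranspose_one,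
    stdBasis_conjTranspose, star_one, star_star]
  abel

lemma swM_mul_self {i j : Fin n} (hij : i ≠ j) {a : R} (ha : a * star a = 1) :
    swM i j a * swM i j a = 1 := by
  have ha' : star a * a = 1 := by rw [mul_comm] at ha; exact ha
  simp only [swM, mul_add, add_mul, mul_sub, sub_mul, mul_one, one_mul,
    single_mul_single_same, mulE hij, mulE hij.symm, ha, ha', mul_one, one_mul]
  abel

lemma swM_mul_swM_one {i j : Fin n} (hij : i ≠ j) (a : R) :
    swM i j a * swM i j 1 = pairD i j a := by
  have h1 : (1 : R) * 1 = 1 := one_mul 1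
  have expand : swM i j a * swM i j 1 =
      1 - single i i 1 - single j j 1 + single i i a
        + single j j (star a) := by
    simp only [swM, star_one, mul_add, add_mul, mul_sub, sub_mul, mul_one, one_mul,
      single_mul_single_same, mulE hij, mulE hij.symm]
    abel
  rw [expand]
  ext k l
  rcases eq_or_ne k l with rfl | hkl
  · rcases eq_or_ne k i with rfl | hki
    · have hkj : k ≠ j := hij
      simp [pairD, Matrix.sub_apply, Matrix.add_apply, Matrix.one_apply_eq,
        Matrix.diagonal_apply_eq, Ne.symm hkj, hkj, Matrix.single]
    · rcases eq_or_ne k j with rfl | hkj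
      · simp [pairD, Matrix.sub_apply, Matrix.add_apply, Matrix.one_apply_eq,
          Matrix.diagonal_apply_eq, hki, Ne.symm hki, Matrix.single]
      · simp [pairD, Matrix.sub_apply, Matrix.add_apply, Matrix.one_apply_eq,
          Matrix.diagonal_apply_eq, hki, hkj, Ne.symm hki, Ne.symm hkj,
          Matrix.single]
  · have h1 : ¬(i = k ∧ i = l) := fun h => hkl (h.1 ▸ h.2 ▸ rfl)
    have h2 : ¬(j = k ∧ j = l) := fun h => hkl (h.1 ▸ h.2 ▸ rfl)
    simp [pairD, Matrix.sub_apply, Matrix.add_apply, Matrix.one_apply_ne hkl,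
      Matrix.diagonal_apply_ne _ hkl, Matrix.single, h1, h2]


variable {R : Type*} [CommRing R] [StarRing R] {n : ℕ}

lemma swM_exists (i j : Fin n) (hij : i ≠ j) (a : R) (ha : a * star a = 1) :
    ∃ s t : Matrix (Fin n) (Fin n) R, sᴴ = s ∧ s * s = 1 ∧ tᴴ = t ∧ t * t = 1 ∧
      s * t = pairD i j a :=
  ⟨swM i j a, swM i j 1, swM_conjTranspose i j a, swM_mul_self hij ha,
    swM_conjTranspose i j 1, swM_mul_self hij (by simp), swM_mul_swM_one hij a⟩

/-- The subgroup generated by self-adjoint unitaries. -/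
def symClosure (n : ℕ) (R : Type*) [CommRing R] [StarRing R] :
    Subgroup (unitary (Matrix (Fin n) (Fin n) R)) :=
  Subgroup.closure {v | star (v : Matrix (Fin n) (Fin n) R) = v}

lemma mem_symClosure_of_selfAdjoint {w : unitary (Matrix (Fin n) (Fin n) R)}
    (h : star (w : Matrix (Fin n) (Fin n) R) = w) : w ∈ symClosure n R :=
  Subgroup.subset_closure h

lemma mem_unitary_of_selfAdjoint {m : Matrix (Fin n) (Fin n) R}
    (h1 : mᴴ = m) (h2 : m * m = 1) : m ∈ unitary (Matrix (Fin n) (Fin n) R) := by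
  rw [Unitary.mem_iff, Matrix.star_eq_conjTranspose, h1]
  exact ⟨h2, h2⟩

lemma diagonal_mem_unitary (d : Fin n → R) (hd : ∀ i, d i * star (d i) = 1) :
    Matrix.diagonal d ∈ unitary (Matrix (Fin n) (Fin n) R) := by
  rw [Unitary.mem_iff, Matrix.star_eq_conjTranspose, diagonal_conjTranspose,
    diagonal_mul_diagonal, diagonal_mul_diagonal]
  constructor <;>
  · ext i j
    rcases eq_or_ne i j with rfl | hij
    · rw [Matrix.diagonal_apply_eq, Matrix.one_apply_eq, Pi.star_apply]
      first
        | exact (mul_comm _ _).trans (hd i)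
        | exact hd i
    · rw [Matrix.diagonal_apply_ne _ hij, Matrix.one_apply_ne hij]

lemma pairD_mem {i j : Fin n} (hij : i ≠ j) {a : R} (ha : a * star a = 1)
    {w : unitary (Matrix (Fin n) (Fin n) R)}
    (hw : (w : Matrix (Fin n) (Fin n) R) = pairD i j a) : w ∈ symClosure n R := by
  obtain ⟨s, t, hs1, hs2, ht1, ht2, hst⟩ := swM_exists i j hij a ha
  let se : unitary (Matrix (Fin n) (Fin n) R) := ⟨s, mem_unitary_of_selfAdjoint hs1 hs2⟩
  let te : unitary (Matrix (Fin n) (Fin n) R) := ⟨t, mem_unitary_of_selfAdjoint ht1 ht2⟩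
  have hws : w = se * te := by
    apply Subtype.ext
    rw [hw]
    exact (hst).symm
  rw [hws]
  exact mul_mem (mem_symClosure_of_selfAdjoint hs1) (mem_symClosure_of_selfAdjoint ht1)

lemma diag_mem_aux (k : ℕ) (d : Fin n → R) (hd : ∀ i, d i * star (d i) = 1)
    (hones : ∀ i : Fin n, (i : ℕ) < n - 1 - k → d i = 1)
    (hprod : (∏ i, d i) ^ 2 = 1)
    (w : unitary (Matrix (Fin n) (Fin n) R))
    (hw : (w : Matrix (Fin n) (Fin n) R) = Matrix.diagonal d) :
    w ∈ symClosure n R := by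
  induction k generalizing d w with
  | zero =>
    rcases Nat.eq_zero_or_pos n with hn | hn
    · have : w = 1 := by
        apply Subtype.ext
        apply Matrix.ext
        intro i _
        exact absurd i.isLt (by omega)
      rw [this]; exact one_mem _
    · set i₀ : Fin n := ⟨n - 1, by omega⟩ with hi₀
      have hprodeq : ∏ i, d i = d i₀ := by
        apply Finset.prod_eq_single i₀
        · intro b _ hb
          apply hones
          have hbn : (b : ℕ) < n := b.isLt
          have : (b : ℕ) ≠ n - 1 := fun h => hb (Fin.ext (by simp [hi₀, h]))
          omega
        · intro h; exact absurd (Finset.mem_univ i₀) h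
      have hsa : ∀ i, star (d i) = d i := by
        intro i
        rcases eq_or_ne i i₀ with h | hi
        · rw [h]
          apply star_eq_self_of_sq (hd i₀)
          have := hprod
          rw [hprodeq, sq] at this
          exact this
        · have : d i = 1 := by
            apply hones
            have : (i : ℕ) ≠ n - 1 := fun h => hi (Fin.ext (by simp [hi₀, h]))
            have := i.isLt
            omega
          rw [this, star_one]
      apply mem_symClosure_of_selfAdjoint
      rw [hw, Matrix.star_eq_conjTranspose, diagonal_conjTranspose]
      exact congrArg Matrix.diagonal (funext fun i => hsa i)
  | succ k ih =>
    by_cases hsame : n - 1 - (k + 1) = n - 1 - k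
    · exact ih d hd (fun i hi => hones i (by omega)) hprod w hw
    · set t := n - 1 - (k + 1) with ht
      have htk : n - 1 - k = t + 1 := by omega
      have ht1 : t + 1 < n := by omega
      set p : Fin n := ⟨t, by omega⟩ with hp
      set q : Fin n := ⟨t + 1, ht1⟩ with hq
      have hvp : (p : ℕ) = t := rfl
      have hvq : (q : ℕ) = t + 1 := rfl
      have hpq : p ≠ q := by
        intro h
        have := congrArg Fin.val h
        rw [hvp, hvq] at this
        omega
      set a := d p with hap
      have ha : a * star a = 1 := by rw [hap]; exact hd p
      have ha' : star a * a = 1 := by rw [mul_comm]; exact ha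
      set d' : Fin n → R :=
        Function.update (Function.update d p 1) q (a * d q) with hd'
      have hd'q : d' q = a * d q := by rw [hd', Function.update_self]
      have hd'p : d' p = 1 := by
        rw [hd', Function.update_of_ne hpq, Function.update_self]
      have hd'other : ∀ i, i ≠ p → i ≠ q → d' i = d i := by
        intro i hip hiq
        rw [hd', Function.update_of_ne hiq, Function.update_of_ne hip]
      have hd'unit : ∀ i, d' i * star (d' i) = 1 := by
        intro i
        rcases eq_or_ne i q with h | hiq
        · rw [h, hd'q, star_mul']
          calc a * d q * (star a * star (d q))
              = (a * star a) * (d q * star (d q)) := by ring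
            _ = 1 := by rw [ha, hd q, one_mul]
        · rcases eq_or_ne i p with h | hip
          · rw [h, hd'p]; simp
          · rw [hd'other i hip hiq]; exact hd i
      have hones' : ∀ i : Fin n, (i : ℕ) < n - 1 - k → d' i = 1 := by
        intro i hi
        rw [htk] at hi
        rcases Nat.lt_or_ge (i : ℕ) t with hlt | hge
        · have hiq : i ≠ q := by
            intro h; have := congrArg Fin.val h; rw [hvq] at this; omega
          have hip : i ≠ p := by
            intro h; have := congrArg Fin.val h; rw [hvp] at this; omega
          rw [hd'other i hip hiq]
          exact hones i (by omega)
        · have hit : (i : ℕ) = t := by omega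
          have hip : i = p := Fin.ext (by rw [hvp]; exact hit)
          rw [hip, hd'p]
      have hprodeq : ∏ i, d' i = ∏ i, d i := by
        have hqmem : q ∈ Finset.univ (α := Fin n) := Finset.mem_univ q
        have hpmem : p ∈ Finset.univ.erase q :=
          Finset.mem_erase.mpr ⟨hpq, Finset.mem_univ p⟩
        rw [← Finset.mul_prod_erase _ _ hqmem, hd'q,
          ← Finset.mul_prod_erase _ _ hpmem, hd'p]
        have hprodrest : ∏ i ∈ (Finset.univ.erase q).erase p, d' i
            = ∏ i ∈ (Finset.univ.erase q).erase p, d i := by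
          apply Finset.prod_congr rfl
          intro i hi
          rw [Finset.mem_erase] at hi
          have hi2 := Finset.mem_erase.mp hi.2
          exact hd'other i hi.1 hi2.1
        rw [hprodrest,
          ← Finset.mul_prod_erase _ _ hqmem,
          ← Finset.mul_prod_erase _ _ hpmem, ← hap]
        ring
      have hprod' : (∏ i, d' i) ^ 2 = 1 := by rw [hprodeq]; exact hprod
      have hpairunit : pairD p q a ∈ unitary (Matrix (Fin n) (Fin n) R) := by
        apply diagonal_mem_unitary
        intro i
        by_cases h1 : i = p
        · rw [if_pos h1]; exact ha
        · by_cases h2 : i = q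
          · rw [if_neg h1, if_pos h2, star_star, mul_comm]; exact ha
          · rw [if_neg h1, if_neg h2]; simp
      let pel : unitary (Matrix (Fin n) (Fin n) R) := ⟨pairD p q a, hpairunit⟩
      let w' : unitary (Matrix (Fin n) (Fin n) R) :=
        ⟨Matrix.diagonal d', diagonal_mem_unitary d' hd'unit⟩
      have hwsplit : w = pel * w' := by
        apply Subtype.ext
        show (w : Matrix (Fin n) (Fin n) R) = pairD p q a * Matrix.diagonal d'
        rw [hw, pairD, diagonal_mul_diagonal]
        refine congrArg Matrix.diagonal (funext fun i => ?_)
        rcases eq_or_ne i p with h | hip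
        · rw [if_pos h, h, hd'p, mul_one, hap]
        · rcases eq_or_ne i q with h2 | hiq
          · rw [if_neg hip, if_pos h2, h2, hd'q]
            calc d q = (star a * a) * d q := by rw [ha', one_mul]
              _ = star a * (a * d q) := by ring
          · rw [if_neg hip, if_neg hiq, hd'other i hip hiq, one_mul]
      rw [hwsplit]
      exact mul_mem (pairD_mem hpq ha rfl) (ih d' hd'unit hones' hprod' w' rfl)


variable {X : Type*} [TopologicalSpace X] {n : ℕ}

/-- Evaluation as a ring hom. -/
noncomputable def ev (x : X) : C(X, ℂ) →+* ℂ where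
  toFun f := f x
  map_one' := rfl
  map_mul' _ _ := rfl
  map_zero' := rfl
  map_add' _ _ := rfl

noncomputable def evM (x : X) (M : Matrix (Fin n) (Fin n) C(X, ℂ)) : Matrix (Fin n) (Fin n) ℂ :=
  (ev x).mapMatrix M

lemma evM_apply (x : X) (M : Matrix (Fin n) (Fin n) C(X, ℂ)) (i j : Fin n) :
    evM x M i j = (M i j) x := rfl

lemma evM_mul (x : X) (M N : Matrix (Fin n) (Fin n) C(X, ℂ)) :
    evM x (M * N) = evM x M * evM x N := _root_.map_mul ((ev x).mapMatrix) M N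

lemma evM_one (x : X) : evM x (1 : Matrix (Fin n) (Fin n) C(X, ℂ)) = 1 := map_one _

lemma evM_star (x : X) (M : Matrix (Fin n) (Fin n) C(X, ℂ)) :
    evM x (star M) = star (evM x M) := by
  ext i j
  rfl

lemma evM_mul' (x : X) (M N : Matrix (Fin n) (Fin n) C(X, ℂ)) :
    evM x (M * N) = evM x M * evM x N := _root_.map_mul ((ev x).mapMatrix) M N

lemma mat_ext {M N : Matrix (Fin n) (Fin n) C(X, ℂ)} (h : ∀ x, evM x M = evM x N) :
    M = N := by
  ext i j x
  calc (M i j) x = evM x M i j := rfl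
    _ = evM x N i j := by rw [h x]
    _ = (N i j) x := rfl

lemma unitary_evM {M : Matrix (Fin n) (Fin n) C(X, ℂ)}
    (h : M ∈ unitary (Matrix (Fin n) (Fin n) C(X, ℂ))) (x : X) :
    evM x M ∈ unitary (Matrix (Fin n) (Fin n) ℂ) := by
  rw [Unitary.mem_iff] at h ⊢
  constructor
  · rw [← evM_star, ← evM_mul, h.1, evM_one]
  · rw [← evM_star, ← evM_mul, h.2, evM_one]

lemma det_eval (x : X) (M : Matrix (Fin n) (Fin n) C(X, ℂ)) :
    (M.det) x = (evM x M).det := RingHom.map_det (ev x) M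

lemma entry_mul_apply (P Q : Matrix (Fin n) (Fin n) C(X, ℂ)) (i j : Fin n) (x : X) :
    ((P * Q) i j) x = ∑ m, (P i m) x * (Q m j) x := by
  calc ((P * Q) i j) x = (evM x P * evM x Q) i j := by rw [← evM_mul]; rfl
    _ = ∑ m, (P i m) x * (Q m j) x := by rw [Matrix.mul_apply]; rfl

/-- entries of a row of a unitary complex matrix: if the diagonal entry has norm 1,
the other entries in its row vanish. -/
lemma row_vanish {m : Matrix (Fin n) (Fin n) ℂ}
    (hm : m ∈ unitary (Matrix (Fin n) (Fin n) ℂ)) {k : Fin n}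
    (hkk : normSq (m k k) = 1) {j : Fin n} (hj : j ≠ k) : m k j = 0 := by
  have h1 : (m * star m) k k = 1 := by
    have := (Unitary.mem_iff.mp hm).2
    rw [this, Matrix.one_apply_eq]
  have h2 : ∑ l, m k l * conj (m k l) = 1 := by
    rw [Matrix.mul_apply] at h1
    simpa [Matrix.star_apply] using h1
  have h3 : ∑ l, (normSq (m k l) : ℂ) = 1 := by
    rw [← h2]
    exact Finset.sum_congr rfl fun l _ => (Complex.mul_conj (m k l)).symm
  have h4 : ∑ l, normSq (m k l) = 1 := by
    have := h3
    push_cast at this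
    exact_mod_cast this
  have h5 : ∑ l ∈ Finset.univ.erase k, normSq (m k l) = 0 := by
    have he := Finset.add_sum_erase Finset.univ (fun l => normSq (m k l)) (Finset.mem_univ k)
    rw [← he] at h4
    rw [hkk] at h4
    linarith
  have h6 : normSq (m k j) = 0 := by
    have hnn : ∀ l ∈ Finset.univ.erase k, 0 ≤ normSq (m k l) := fun l _ => normSq_nonneg _
    have := (Finset.sum_eq_zero_iff_of_nonneg hnn).mp h5 j
      (Finset.mem_erase.mpr ⟨hj, Finset.mem_univ j⟩)
    exact this
  exact normSq_eq_zero.mp h6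

/-- entries of unitary matrices have `normSq ≤ 1`. -/
lemma unitary_entry_le {m : Matrix (Fin n) (Fin n) ℂ}
    (hm : m ∈ unitary (Matrix (Fin n) (Fin n) ℂ)) (i j : Fin n) :
    ‖m i j‖ ≤ 1 := by
  have h1 : (m * star m) i i = 1 := by
    have := (Unitary.mem_iff.mp hm).2
    rw [this, Matrix.one_apply_eq]
  have h2 : ∑ l, m i l * conj (m i l) = 1 := by
    rw [Matrix.mul_apply] at h1
    simpa [Matrix.star_apply] using h1
  have h3 : ∑ l, (normSq (m i l) : ℂ) = 1 := by
    rw [← h2]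
    exact Finset.sum_congr rfl fun l _ => (Complex.mul_conj (m i l)).symm
  have h4 : ∑ l, normSq (m i l) = 1 := by
    have := h3
    push_cast at this
    exact_mod_cast this
  have h5 : normSq (m i j) ≤ 1 := by
    rw [← h4]
    exact Finset.single_le_sum (fun l _ => normSq_nonneg _) (Finset.mem_univ j)
  calc ‖m i j‖ = Real.sqrt (normSq (m i j)) := by rw [Complex.norm_def]
    _ ≤ Real.sqrt 1 := Real.sqrt_le_sqrt h5
    _ = 1 := Real.sqrt_one

section Householder

variable {v c : Fin n → ℂ} {μ Qc : ℂ} {k : Fin n}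

/-- pointwise Householder entries -/
noncomputable def hhE (v : Fin n → ℂ) (Qc : ℂ) (i j : Fin n) : ℂ :=
  (if i = j then 1 else 0) - (2 / Qc) * (v i * conj (v j))

lemma hhE_symm (v : Fin n → ℂ) {Qc : ℂ} (hQr : conj Qc = Qc) (i j : Fin n) :
    conj (hhE v Qc j i) = hhE v Qc i j := by
  have hconj : conj (if j = i then (1:ℂ) else 0) = (if i = j then (1:ℂ) else 0) := by
    rcases eq_or_ne i j with rfl | h
    · simp
    · rw [if_neg h, if_neg (Ne.symm h), map_zero]
  simp only [hhE, map_sub, _root_.map_mul, map_div₀, map_ofNat, map_inv₀, hQr,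
    Complex.conj_conj, hconj]
  ring

lemma hhE_mul (v : Fin n → ℂ) {Qc : ℂ} (hQ : Qc ≠ 0)
    (hqv : Qc = ∑ m, v m * conj (v m)) (i j : Fin n) :
    ∑ m, hhE v Qc i m * hhE v Qc m j = if i = j then 1 else 0 := by
  have expand : ∀ m, hhE v Qc i m * hhE v Qc m j =
      ((if i = m then (1:ℂ) else 0) * (if m = j then 1 else 0)
        - (2/Qc) * (if i = m then (v m * conj (v j)) else 0)
        - (2/Qc) * (if m = j then (v i * conj (v m)) else 0))
        + (2/Qc)^2 * ((v i * conj (v j)) * (v m * conj (v m))) := by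
    intro m
    simp only [hhE]
    split_ifs with h1 h2 h2 <;> ring
  rw [Finset.sum_congr rfl fun m _ => expand m]
  rw [Finset.sum_add_distrib, ← Finset.mul_sum, ← Finset.mul_sum, ← hqv]
  have e1 : ∑ m, ((if i = m then (1:ℂ) else 0) * (if m = j then 1 else 0)
        - (2/Qc) * (if i = m then (v m * conj (v j)) else 0)
        - (2/Qc) * (if m = j then (v i * conj (v m)) else 0))
      = (if i = j then (1:ℂ) else 0) - (2/Qc) * (v i * conj (v j))
        - (2/Qc) * (v i * conj (v j)) := by
    rw [Finset.sum_sub_distrib, Finset.sum_sub_distrib, ← Finset.mul_sum, ← Finset.mul_sum]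
    congr 2
    · rw [Finset.sum_congr rfl (fun m _ => boole_mul (i = m) _), Finset.sum_ite_eq]
      simp
    · rw [Finset.sum_ite_eq]
      simp
    · rw [Finset.sum_ite_eq']
      simp
  rw [e1]
  field_simp
  rcases eq_or_ne i j with rfl | h
  · ring
  · ring

lemma delta_sum (i j : Fin n) :
    ∑ m, (if i = m then (1:ℂ) else 0) * (if m = j then 1 else 0)
      = if i = j then 1 else 0 := by
  rw [Finset.sum_congr rfl fun m _ => boole_mul (i = m) _, Finset.sum_ite_eq]
  simp

lemma hhE_action (v cc : Fin n → ℂ) {Qc μ : ℂ} (k : Fin n) (hQ : Qc ≠ 0)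
    (hqv : Qc = ∑ m, v m * conj (v m))
    (hv : ∀ j, v j = cc j - if j = k then μ else 0)
    (hμ1 : μ * conj μ = 1)
    (hck : conj (cc k) * μ = 1 - Qc / 2) (i : Fin n) :
    ∑ j, hhE v Qc i j * cc j = if i = k then μ else 0 := by
  have hsplit : ∀ j, hhE v Qc i j * cc j =
      (if i = j then cc j else 0) - (2/Qc) * (v i * (conj (v j) * cc j)) := by
    intro j
    simp only [hhE]
    split_ifs <;> ring
  rw [Finset.sum_congr rfl fun j _ => hsplit j, Finset.sum_sub_distrib,
    ← Finset.mul_sum, ← Finset.mul_sum, Finset.sum_ite_eq]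
  have key : ∑ j, conj (v j) * cc j = Qc / 2 := by
    have hterm : ∀ j, conj (v j) * cc j =
        v j * conj (v j) + (if j = k then conj (v k) * μ else 0) := by
      intro j
      have hc : cc j = v j + (if j = k then μ else 0) := by rw [hv j]; ring
      rcases eq_or_ne j k with rfl | hjk
      · rw [hc, if_pos rfl, if_pos rfl]; ring
      · rw [hc, if_neg hjk, if_neg hjk]; ring
    rw [Finset.sum_congr rfl fun j _ => hterm j, Finset.sum_add_distrib,
      Finset.sum_ite_eq']
    have hvk : conj (v k) * μ = -(Qc / 2) := by
      have : conj (v k) = conj (cc k) - conj μ := by rw [hv k, if_pos rfl, map_sub]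
      rw [this, sub_mul, hck]
      have : conj μ * μ = 1 := by rw [mul_comm]; exact hμ1
      rw [this]
      ring
    rw [hvk, ← hqv]
    simp
    ring
  rw [key]
  have : cc i - v i = if i = k then μ else 0 := by rw [hv i]; ring
  rw [← this]
  simp only [Finset.mem_univ, if_pos]
  field_simp

end Householder


section Step

variable {X : Type*} [TopologicalSpace X] [CompactSpace X] [T2Space X]
  [ExtremallyDisconnected X] {n : ℕ}

lemma eqOn_dense_ext {D : Set X} (hD : Dense D) {φ ψ : X → ℂ}
    (hφ : Continuous φ) (hψ : Continuous ψ) (h : ∀ x ∈ D, φ x = ψ x) (x : X) :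
    φ x = ψ x :=
  congrFun (Continuous.ext_on hD hφ hψ h) x

lemma householder_step {M : Matrix (Fin n) (Fin n) C(X, ℂ)}
    (hM : M ∈ unitary (Matrix (Fin n) (Fin n) C(X, ℂ))) (k : Fin n)
    (hdiag : ∀ i j : Fin n, i ≠ j → ((i:ℕ) < (k:ℕ) ∨ (j:ℕ) < (k:ℕ)) → M i j = 0) :
    ∃ H : Matrix (Fin n) (Fin n) C(X, ℂ), star H = H ∧ H * H = 1 ∧
      ∀ i j : Fin n, i ≠ j → ((i:ℕ) < (k:ℕ) + 1 ∨ (j:ℕ) < (k:ℕ) + 1) →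
        (H * M) i j = 0 := by
  classical
  set g : C(X, ℂ) := M k k with hg
  have hMx : ∀ x, evM x M ∈ unitary (Matrix (Fin n) (Fin n) ℂ) := unitary_evM hM
  -- column normalization
  have hcol : ∀ x, ∑ i, (M i k) x * conj ((M i k) x) = 1 := by
    intro x
    have h1 : (star (evM x M) * evM x M) k k = 1 := by
      rw [(Unitary.mem_iff.mp (hMx x)).1, Matrix.one_apply_eq]
    rw [Matrix.mul_apply] at h1
    rw [← h1]
    refine Finset.sum_congr rfl fun i _ => ?_
    rw [Matrix.star_apply, Complex.star_def, evM_apply, mul_comm]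
  -- Step A : the phase μ
  set coz : Set X := {x | g x ≠ 0} with hcoz_def
  have hcoz : IsOpen coz := by
    have : IsClosed {x : X | g x = 0} := isClosed_eq (map_continuous g) continuous_const
    exact this.isOpen_compl
  set D₁ : Set X := coz ∪ (closure coz)ᶜ with hD₁def
  have hD₁o : IsOpen D₁ := hcoz.union isClosed_closure.isOpen_compl
  have hD₁d : Dense D₁ := dense_union_compl_closure hcoz
  set f₁ : X → ℂ := fun x => if g x = 0 then 1 else g x / (‖g x‖ : ℂ)
    with hf₁def
  have hf₁cont : ContinuousOn f₁ D₁ := by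
    intro x hx
    apply ContinuousAt.continuousWithinAt
    rcases hx with hx | hx
    · have habs : ContinuousAt (fun y => g y / (‖g y‖ : ℂ)) x := by
        apply ContinuousAt.div
        · exact (map_continuous g).continuousAt
        · exact (Complex.continuous_ofReal.comp
            (continuous_norm.comp (map_continuous g))).continuousAt
        · exact Complex.ofReal_ne_zero.mpr (norm_ne_zero_iff.mpr hx)
      apply habs.congr
      filter_upwards [hcoz.mem_nhds hx] with y hy
      exact (if_neg hy).symm
    · apply continuousAt_const.congr
      filter_upwards [isClosed_closure.isOpen_compl.mem_nhds hx] with y hy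
      have : g y = 0 := by
        by_contra hgy
        exact hy (subset_closure hgy)
      exact (if_pos this).symm
  have hf₁mem : ∀ x ∈ D₁, f₁ x ∈ Metric.sphere (0 : ℂ) 1 := by
    intro x _
    rw [Metric.mem_sphere, Complex.dist_eq, sub_zero]
    by_cases hgx : g x = 0
    · rw [hf₁def]; simp [hgx]
    · have habs : ‖g x‖ ≠ 0 := norm_ne_zero_iff.mpr hgx
      rw [hf₁def]
      simp only [if_neg hgx, norm_div, Complex.norm_real, Real.norm_eq_abs,
        _root_.abs_of_nonneg (norm_nonneg (g x))]
      rw [div_self habs]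
  obtain ⟨μf, hμcont, hμmem, hμeq⟩ :=
    exists_extension_of_denseOpen (M := ℂ) hD₁o hD₁d
      (isCompact_sphere (0 : ℂ) 1) hf₁cont hf₁mem
  have hμabs : ∀ x, ‖μf x‖ = 1 := by
    intro x
    have := hμmem x
    rwa [Metric.mem_sphere, Complex.dist_eq, sub_zero] at this
  have hμ1 : ∀ x, μf x * conj (μf x) = 1 := by
    intro x
    rw [Complex.mul_conj]
    rw [Complex.normSq_eq_norm_sq, hμabs x]
    norm_num
  have hμg : ∀ x, conj (μf x) * g x = (‖g x‖ : ℂ) := by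
    apply eqOn_dense_ext hD₁d
    · exact (Complex.continuous_conj.comp hμcont).mul (map_continuous g)
    · exact Complex.continuous_ofReal.comp (continuous_norm.comp (map_continuous g))
    · intro x hx
      rw [hμeq x hx]
      by_cases hgx : g x = 0
      · rw [hf₁def]; simp [hgx]
      · have habs : (‖g x‖ : ℂ) ≠ 0 :=
          Complex.ofReal_ne_zero.mpr (norm_ne_zero_iff.mpr hgx)
        rw [hf₁def]
        simp only [if_neg hgx]
        rw [map_div₀, Complex.conj_ofReal]
        have hns : conj (g x) * g x = ((‖g x‖ : ℂ))^2 := by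
          rw [mul_comm, Complex.mul_conj, Complex.normSq_eq_norm_sq]
          push_cast
          ring
        field_simp
        rw [mul_comm (conj (g x)) (g x)] at hns ⊢
        rw [hns]
  -- Step B : the Householder vector
  set vf : X → Fin n → ℂ := fun x i => (M i k) x - (if i = k then μf x else 0)
    with hvfdef
  have hvfcont : ∀ i, Continuous fun x => vf x i := by
    intro i
    apply Continuous.sub (map_continuous (M i k))
    by_cases hik : i = k
    · simp only [if_pos hik]; exact hμcont
    · simp only [if_neg hik]; exact continuous_const
  set q : X → ℝ := fun x => ∑ i, Complex.normSq (vf x i) with hqdef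
  have hqcont : Continuous q :=
    continuous_finset_sum _ fun i _ => Complex.continuous_normSq.comp (hvfcont i)
  have hQc : ∀ x, ((q x : ℝ) : ℂ) = ∑ m, vf x m * conj (vf x m) := by
    intro x
    rw [hqdef]
    push_cast
    exact Finset.sum_congr rfl fun m _ => (Complex.mul_conj (vf x m)).symm
  have hv0 : ∀ x, q x = 0 → ∀ i, vf x i = 0 := by
    intro x hqx i
    have h := (Finset.sum_eq_zero_iff_of_nonneg
      (fun m (_ : m ∈ Finset.univ) => Complex.normSq_nonneg (vf x m))).mp hqx i
      (Finset.mem_univ i)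
    exact Complex.normSq_eq_zero.mp h
  have hvlow : ∀ i : Fin n, (i:ℕ) < (k:ℕ) → ∀ x, vf x i = 0 := by
    intro i hi x
    have hik : i ≠ k := fun h => by rw [h] at hi; omega
    have hMik : M i k = 0 := hdiag i k hik (Or.inl hi)
    rw [hvfdef]
    simp only [if_neg hik, sub_zero, hMik]
    rfl
  -- the key global identity q = 2 - 2|g|
  have hq2 : ∀ x, ((q x : ℝ) : ℂ) = 2 - 2 * (‖g x‖ : ℂ) := by
    intro x
    rw [hQc x]
    have hterm : ∀ m, vf x m * conj (vf x m)
        = (M m k) x * conj ((M m k) x)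
          + (if m = k then (μf x * conj (μf x)
              - μf x * conj ((M k k) x) - (M k k) x * conj (μf x)) else 0) := by
      intro m
      rcases eq_or_ne m k with rfl | hmk
      · have hvk : vf x m = (M m m) x - μf x := by rw [hvfdef]; simp
        rw [hvk, if_pos rfl, map_sub]
        ring
      · have hvm : vf x m = (M m k) x := by rw [hvfdef]; simp [hmk]
        rw [hvm, if_neg hmk, add_zero]
    rw [Finset.sum_congr rfl fun m _ => hterm m, Finset.sum_add_distrib, hcol x,
      Finset.sum_ite_eq']
    simp only [Finset.mem_univ, if_pos]
    have h1 := hμ1 x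
    have h2 : conj (μf x) * g x = (‖g x‖ : ℂ) := hμg x
    have h3 : μf x * conj (g x) = (‖g x‖ : ℂ) := by
      have hcg := congrArg conj h2
      rw [_root_.map_mul, Complex.conj_conj, Complex.conj_ofReal] at hcg
      exact hcg
    have hgkk : (M k k) x = g x := rfl
    rw [hgkk, h1, h3]
    rw [mul_comm ((g x)) (conj (μf x)), h2]
    ring
  -- the region where the Householder reflection is non-trivial
  set Ω : Set X := {x | q x ≠ 0} with hΩdef
  have hΩo : IsOpen Ω := (isClosed_eq hqcont continuous_const).isOpen_compl
  set D₂ : Set X := Ω ∪ (closure Ω)ᶜ with hD₂def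
  have hD₂o : IsOpen D₂ := hΩo.union isClosed_closure.isOpen_compl
  have hD₂d : Dense D₂ := dense_union_compl_closure hΩo
  have hq0' : ∀ x ∈ D₂, x ∉ Ω → q x = 0 := by
    intro x _ hx
    by_contra h
    exact hx h
  -- entries of the Householder matrix
  set fE : Fin n → Fin n → X → ℂ := fun i j x =>
    if q x = 0 then (if i = j then 1 else 0) else hhE (vf x) ((q x : ℝ) : ℂ) i j
    with hfEdef
  have hfE_eval : ∀ (i j : Fin n) (x : X), fE i j x =
      if q x = 0 then (if i = j then 1 else 0) else hhE (vf x) ((q x : ℝ) : ℂ) i j :=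
    fun _ _ _ => rfl
  -- pointwise unitarity on Ω
  have hhU : ∀ x, q x ≠ 0 →
      (Matrix.of fun i j => hhE (vf x) ((q x : ℝ) : ℂ) i j)
        ∈ unitary (Matrix (Fin n) (Fin n) ℂ) := by
    intro x hqx
    have hQne : ((q x : ℝ) : ℂ) ≠ 0 := Complex.ofReal_ne_zero.mpr hqx
    apply mem_unitary_of_selfAdjoint
    · ext i j
      rw [Matrix.conjTranspose_apply, Matrix.of_apply, Matrix.of_apply, Complex.star_def]
      exact hhE_symm (vf x) (Complex.conj_ofReal _) i j
    · ext i j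
      rw [Matrix.mul_apply]
      simp only [Matrix.of_apply]
      rw [hhE_mul (vf x) hQne (hQc x) i j, Matrix.one_apply]
  have hfEcont : ∀ i j, ContinuousOn (fE i j) D₂ := by
    intro i j y hy
    apply ContinuousAt.continuousWithinAt
    rcases hy with hy | hy
    · have hev : ContinuousAt (fun x => hhE (vf x) ((q x : ℝ) : ℂ) i j) y := by
        simp only [hhE]
        apply ContinuousAt.sub continuousAt_const
        apply ContinuousAt.mul
        · apply ContinuousAt.div continuousAt_const
          · exact (Complex.continuous_ofReal.comp hqcont).continuousAt
          · exact Complex.ofReal_ne_zero.mpr hy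
        · exact ((hvfcont i).mul (Complex.continuous_conj.comp (hvfcont j))).continuousAt
      apply hev.congr
      filter_upwards [hΩo.mem_nhds hy] with z hz
      rw [hfE_eval i j z, if_neg hz]
    · apply ContinuousAt.congr (continuousAt_const (y := if i = j then (1:ℂ) else 0))
      filter_upwards [isClosed_closure.isOpen_compl.mem_nhds hy] with z hz
      have hz0 : q z = 0 := by
        by_contra h
        exact hz (subset_closure h)
      rw [hfE_eval i j z, if_pos hz0]
  have hfEmem : ∀ i j, ∀ x ∈ D₂, fE i j x ∈ Metric.closedBall (0 : ℂ) 1 := by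
    intro i j x _
    rw [Metric.mem_closedBall, Complex.dist_eq, sub_zero]
    by_cases hqx : q x = 0
    · rw [hfE_eval i j x, if_pos hqx]
      split_ifs <;> simp
    · rw [hfE_eval i j x, if_neg hqx]
      have := unitary_entry_le (hhU x hqx) i j
      simpa using this
  have hex : ∀ i j : Fin n, ∃ F : X → ℂ, Continuous F ∧
      (∀ x, F x ∈ Metric.closedBall (0 : ℂ) 1) ∧ ∀ x ∈ D₂, F x = fE i j x :=
    fun i j => exists_extension_of_denseOpen (M := ℂ) hD₂o hD₂d
      (isCompact_closedBall (0 : ℂ) 1) (hfEcont i j) (hfEmem i j)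
  choose F hFc hFb hFeq using hex
  set H : Matrix (Fin n) (Fin n) C(X, ℂ) :=
    Matrix.of fun i j => ⟨F i j, hFc i j⟩ with hHdef
  have hHapp : ∀ i j x, (H i j) x = F i j x := fun i j x => rfl
  -- (G1) self-adjointness
  have hG1 : star H = H := by
    rw [Matrix.star_eq_conjTranspose]
    ext i j x
    rw [Matrix.conjTranspose_apply]
    show star ((H j i) x) = (H i j) x
    rw [Complex.star_def, hHapp, hHapp]
    refine eqOn_dense_ext hD₂d (φ := fun z => conj (F j i z)) (ψ := fun z => F i j z)
      ?_ ?_ ?_ x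
    · exact Complex.continuous_conj.comp (hFc j i)
    · exact hFc i j
    · intro y hy
      show conj (F j i y) = F i j y
      rw [hFeq j i y hy, hFeq i j y hy, hfE_eval j i y, hfE_eval i j y]
      by_cases hqy : q y = 0
      · rw [if_pos hqy, if_pos hqy]
        rcases eq_or_ne i j with rfl | hij
        · simp
        · rw [if_neg hij, if_neg (Ne.symm hij), map_zero]
      · rw [if_neg hqy, if_neg hqy]
        exact hhE_symm (vf y) (Complex.conj_ofReal _) i j
  -- (G2) H * H = 1
  have hG2 : H * H = 1 := by
    ext i j x
    rw [entry_mul_apply]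
    have hone : ((1 : Matrix (Fin n) (Fin n) C(X, ℂ)) i j) x
        = if i = j then 1 else 0 := by
      rw [Matrix.one_apply]
      split_ifs <;> rfl
    rw [hone]
    refine eqOn_dense_ext hD₂d (φ := fun z => ∑ m, F i m z * F m j z)
      (ψ := fun _ => if i = j then (1:ℂ) else 0) ?_ ?_ ?_ x
    · exact continuous_finset_sum _ fun m _ => (hFc i m).mul (hFc m j)
    · exact continuous_const
    · intro y hy
      show (∑ m, F i m y * F m j y) = if i = j then (1:ℂ) else 0
      by_cases hqy : q y = 0
      · have hterm : ∀ m, F i m y * F m j y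
            = (if i = m then (1:ℂ) else 0) * (if m = j then 1 else 0) := fun m => by
          rw [hFeq i m y hy, hFeq m j y hy, hfE_eval i m y, hfE_eval m j y,
            if_pos hqy, if_pos hqy]
        rw [Finset.sum_congr rfl fun m _ => hterm m]
        exact delta_sum i j
      · have hQne : ((q y : ℝ) : ℂ) ≠ 0 := Complex.ofReal_ne_zero.mpr hqy
        have hterm : ∀ m, F i m y * F m j y
            = hhE (vf y) ((q y : ℝ) : ℂ) i m * hhE (vf y) ((q y : ℝ) : ℂ) m j :=
          fun m => by
            rw [hFeq i m y hy, hFeq m j y hy, hfE_eval i m y, hfE_eval m j y,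
              if_neg hqy, if_neg hqy]
        rw [Finset.sum_congr rfl fun m _ => hterm m]
        exact hhE_mul (vf y) hQne (hQc y) i j
  -- (G3) column action
  have hG3 : ∀ i, (H * M) i k
      = if i = k then (⟨μf, hμcont⟩ : C(X, ℂ)) else 0 := by
    intro i
    apply ContinuousMap.ext
    intro x
    rw [entry_mul_apply]
    have hrhs : ((if i = k then (⟨μf, hμcont⟩ : C(X, ℂ)) else 0) : C(X, ℂ)) x
        = if i = k then μf x else 0 := by
      split_ifs <;> rfl
    rw [hrhs]
    refine eqOn_dense_ext hD₂d (φ := fun z => ∑ m, F i m z * (M m k) z)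
      (ψ := fun z => if i = k then μf z else 0) ?_ ?_ ?_ x
    · exact continuous_finset_sum _ fun m _ => (hFc i m).mul (map_continuous (M m k))
    · by_cases hik : i = k
      · simp only [if_pos hik]; exact hμcont
      · simp only [if_neg hik]; exact continuous_const
    · intro y hy
      show (∑ m, F i m y * (M m k) y) = if i = k then μf y else 0
      by_cases hqy : q y = 0
      · have hc : ∀ m, (M m k) y = if m = k then μf y else 0 := by
          intro m
          have := hv0 y hqy m
          rw [hvfdef] at this
          exact sub_eq_zero.mp this
        have hterm : ∀ m, F i m y * (M m k) y
            = (if i = m then (1:ℂ) else 0) * (if m = k then μf y else 0) := fun m => by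
          rw [hFeq i m y hy, hfE_eval i m y, if_pos hqy, hc m]
        rw [Finset.sum_congr rfl fun m _ => hterm m]
        rw [Finset.sum_congr rfl fun m _ => (boole_mul (i = m) _), Finset.sum_ite_eq]
        simp
      · have hQne : ((q y : ℝ) : ℂ) ≠ 0 := Complex.ofReal_ne_zero.mpr hqy
        have hterm : ∀ m, F i m y * (M m k) y
            = hhE (vf y) ((q y : ℝ) : ℂ) i m * (M m k) y := fun m => by
          rw [hFeq i m y hy, hfE_eval i m y, if_neg hqy]
        rw [Finset.sum_congr rfl fun m _ => hterm m]
        apply hhE_action (vf y) (fun m => (M m k) y) k hQne (hQc y)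
          (fun m => rfl) (hμ1 y)
        -- conj (c k) * μ = 1 - Q/2
        have h3 : conj (g y) * μf y = (‖g y‖ : ℂ) := by
          have hcg := congrArg conj (hμg y)
          rw [_root_.map_mul, Complex.conj_conj, Complex.conj_ofReal] at hcg
          rw [mul_comm]
          exact hcg
        have h4 := hq2 y
        show conj ((M k k) y) * μf y = 1 - ((q y : ℝ) : ℂ) / 2
        have hgkk : (M k k) y = g y := rfl
        rw [hgkk, h3, h4]
        ring
  -- (G4) identity rows and columns
  have hG4 : ∀ i j : Fin n, ((i:ℕ) < (k:ℕ) ∨ (j:ℕ) < (k:ℕ)) →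
      H i j = (1 : Matrix (Fin n) (Fin n) C(X, ℂ)) i j := by
    intro i j hij
    apply ContinuousMap.ext
    intro x
    rw [hHapp]
    have hone : ((1 : Matrix (Fin n) (Fin n) C(X, ℂ)) i j) x
        = if i = j then 1 else 0 := by
      rw [Matrix.one_apply]; split_ifs <;> rfl
    rw [hone]
    refine eqOn_dense_ext hD₂d (hFc i j) continuous_const ?_ x
    intro y hy
    rw [hFeq i j y hy, hfE_eval i j y]
    by_cases hqy : q y = 0
    · rw [if_pos hqy]
    · rw [if_neg hqy]
      simp only [hhE]
      rcases hij with hik | hjk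
      · rw [hvlow i hik y]
        ring_nf
      · rw [hvlow j hjk y]
        rw [map_zero]
        ring_nf
  refine ⟨H, hG1, hG2, ?_⟩
  have hHu : H ∈ unitary (Matrix (Fin n) (Fin n) C(X, ℂ)) :=
    mem_unitary_of_selfAdjoint (Matrix.star_eq_conjTranspose H ▸ hG1) hG2
  have hHMu : H * M ∈ unitary (Matrix (Fin n) (Fin n) C(X, ℂ)) := mul_mem hHu hM
  intro i j hij hlt
  by_cases hjk : (j:ℕ) < (k:ℕ)
  · -- column j is concentrated at the diagonal
    rw [Matrix.mul_apply]
    apply Finset.sum_eq_zero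
    intro m _
    rcases eq_or_ne m j with rfl | hmj
    · rw [hG4 i m (Or.inr hjk), Matrix.one_apply_ne hij, zero_mul]
    · rw [hdiag m j hmj (Or.inr hjk), mul_zero]
  · by_cases hik : (i:ℕ) < (k:ℕ)
    · rw [Matrix.mul_apply]
      apply Finset.sum_eq_zero
      intro m _
      rcases eq_or_ne m i with rfl | hmi
      · rw [hdiag m j hij (Or.inl hik), mul_zero]
      · rw [hG4 i m (Or.inl hik), Matrix.one_apply_ne (Ne.symm hmi), zero_mul]
    · -- now i = k or j = k
      have hikj : i = k ∨ j = k := by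
        rcases hlt with h | h
        · left; exact Fin.ext (by omega)
        · right; exact Fin.ext (by omega)
      rcases hikj with rfl | rfl
      · -- i = k, j ≠ k : row argument
        apply ContinuousMap.ext
        intro x
        have hmx : evM x (H * M) ∈ unitary (Matrix (Fin n) (Fin n) ℂ) :=
          unitary_evM hHMu x
        have hkk : evM x (H * M) i i = μf x := by
          rw [evM_apply, hG3 i]
          simp
        have hnsq : Complex.normSq (evM x (H * M) i i) = 1 := by
          rw [hkk]
          have := hμ1 x
          rw [Complex.mul_conj] at this
          exact_mod_cast this
        have := row_vanish hmx hnsq (Ne.symm hij)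
        rw [evM_apply] at this
        rw [this]
        rfl
      · -- j = k, i ≠ k
        rw [hG3 i]
        simp only [if_neg hij]
  -- done

end Step

section Main

variable {X : Type*} [TopologicalSpace X] [CompactSpace X] [T2Space X]
  [ExtremallyDisconnected X] {n : ℕ}

lemma sq_det_eq_one_of_mem {u : unitary (Matrix (Fin n) (Fin n) C(X, ℂ))}
    (hu : u ∈ symClosure n C(X, ℂ)) :
    ((u : Matrix (Fin n) (Fin n) C(X, ℂ)).det) ^ 2 = 1 := by
  refine Subgroup.closure_induction
    (p := fun (w : unitary (Matrix (Fin n) (Fin n) C(X, ℂ))) _ =>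
      ((w : Matrix (Fin n) (Fin n) C(X, ℂ)).det) ^ 2 = 1)
    ?_ ?_ ?_ ?_ hu
  · intro v hv
    have h1 : (v : Matrix (Fin n) (Fin n) C(X, ℂ)) * (v : Matrix (Fin n) (Fin n) C(X, ℂ))
        = 1 := by
      have h2 := Unitary.coe_star_mul_self v
      rwa [hv] at h2
    rw [sq, ← Matrix.det_mul, h1, Matrix.det_one]
  · simp
  · intro a b _ _ ha hb
    rw [Submonoid.coe_mul, Matrix.det_mul, mul_pow, ha, hb, mul_one]
  · intro a _ ha
    have hco : ((a⁻¹ : unitary (Matrix (Fin n) (Fin n) C(X, ℂ)))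
        : Matrix (Fin n) (Fin n) C(X, ℂ)) = star (a : Matrix (Fin n) (Fin n) C(X, ℂ)) := by
      rw [← Unitary.star_eq_inv, Unitary.coe_star]
    rw [hco, Matrix.star_eq_conjTranspose, Matrix.det_conjTranspose, ← star_pow, ha, star_one]

theorem mem_symClosure_of_det_sq {u : unitary (Matrix (Fin n) (Fin n) C(X, ℂ))}
    (hdet : ((u : Matrix (Fin n) (Fin n) C(X, ℂ)).det) ^ 2 = 1) :
    u ∈ symClosure n C(X, ℂ) := by
  classical
  -- reduce to diagonal by symmetries
  have key : ∀ m : ℕ, m ≤ n → ∃ s : unitary (Matrix (Fin n) (Fin n) C(X, ℂ)),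
      s ∈ symClosure n C(X, ℂ) ∧ ∀ i j : Fin n, i ≠ j → ((i:ℕ) < m ∨ (j:ℕ) < m) →
        ((s : Matrix (Fin n) (Fin n) C(X, ℂ)) * (u : Matrix (Fin n) (Fin n) C(X, ℂ))) i j
          = 0 := by
    intro m
    induction m with
    | zero =>
      intro _
      exact ⟨1, one_mem _, fun i j hij h => by rcases h with h | h <;> omega⟩
    | succ m ih =>
      intro hm
      obtain ⟨s, hs, hsd⟩ := ih (by omega)
      set M : Matrix (Fin n) (Fin n) C(X, ℂ) :=
        (s : Matrix (Fin n) (Fin n) C(X, ℂ)) * (u : Matrix (Fin n) (Fin n) C(X, ℂ))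
        with hMdef
      have hMu : M ∈ unitary (Matrix (Fin n) (Fin n) C(X, ℂ)) := mul_mem s.2 u.2
      set km : Fin n := ⟨m, by omega⟩ with hkm
      have hkmv : (km : ℕ) = m := rfl
      have hsd' : ∀ i j : Fin n, i ≠ j → ((i:ℕ) < (km:ℕ) ∨ (j:ℕ) < (km:ℕ)) → M i j = 0 := by
        intro i j hij hlt
        rw [hkmv] at hlt
        exact hsd i j hij hlt
      obtain ⟨H, hH1, hH2, hH3⟩ := householder_step hMu km hsd'
      have hH1' : Hᴴ = H := by rwa [Matrix.star_eq_conjTranspose] at hH1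
      have hHu : H ∈ unitary (Matrix (Fin n) (Fin n) C(X, ℂ)) :=
        mem_unitary_of_selfAdjoint hH1' hH2
      refine ⟨⟨H, hHu⟩ * s, mul_mem (mem_symClosure_of_selfAdjoint hH1) hs, ?_⟩
      intro i j hij hlt
      have hco : ((↑((⟨H, hHu⟩ : unitary (Matrix (Fin n) (Fin n) C(X, ℂ))) * s)
          : Matrix (Fin n) (Fin n) C(X, ℂ)) * (u : Matrix (Fin n) (Fin n) C(X, ℂ)))
          = H * M := by
        rw [Submonoid.coe_mul, hMdef, mul_assoc]
      rw [hco]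
      exact hH3 i j hij (by rw [hkmv]; exact hlt)
  obtain ⟨s, hs, hsdiag⟩ := key n le_rfl
  set M : Matrix (Fin n) (Fin n) C(X, ℂ) :=
    (s : Matrix (Fin n) (Fin n) C(X, ℂ)) * (u : Matrix (Fin n) (Fin n) C(X, ℂ)) with hMdef
  have hMu : M ∈ unitary (Matrix (Fin n) (Fin n) C(X, ℂ)) := mul_mem s.2 u.2
  set D : Fin n → C(X, ℂ) := fun i => M i i with hDdef
  have hdiagM : M = Matrix.diagonal D := by
    apply Matrix.ext
    intro i j
    rcases eq_or_ne i j with rfl | hij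
    · rw [Matrix.diagonal_apply_eq]
    · rw [Matrix.diagonal_apply_ne _ hij]
      exact hsdiag i j hij (Or.inl i.isLt)
  have hDunit : ∀ i, D i * star (D i) = 1 := by
    intro i
    have h1 : M * star M = 1 := (Unitary.mem_iff.mp hMu).2
    rw [hdiagM, Matrix.star_eq_conjTranspose, Matrix.diagonal_conjTranspose,
      Matrix.diagonal_mul_diagonal] at h1
    have h2 := congrArg (fun A => A i i) h1
    simp only [Matrix.diagonal_apply_eq, Matrix.one_apply_eq] at h2
    exact h2
  have hprod : (∏ i, D i) ^ 2 = 1 := by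
    have hdet2 : M.det = ∏ i, D i := by rw [hdiagM, Matrix.det_diagonal]
    have h1 : (M.det) ^ 2 = 1 := by
      rw [hMdef, Matrix.det_mul, mul_pow, sq_det_eq_one_of_mem hs, one_mul]
      exact hdet
    rw [← hdet2]
    exact h1
  have hw' : (((s * u : unitary (Matrix (Fin n) (Fin n) C(X, ℂ))))
      : Matrix (Fin n) (Fin n) C(X, ℂ)) = Matrix.diagonal D := by
    rw [Submonoid.coe_mul, ← hMdef]
    exact hdiagM
  have hmem : s * u ∈ symClosure n C(X, ℂ) :=
    diag_mem_aux n D hDunit (fun i hi => absurd hi (by omega)) hprod (s * u) hw'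
  have hu : u = s⁻¹ * (s * u) := by rw [← mul_assoc, inv_mul_cancel, one_mul]
  rw [hu]
  exact mul_mem (inv_mem hs) hmem

end Main

end SymGen

open SymGen in
/-- In the unitary group of `n × n` matrices over `C(X, ℂ)` (`X` Stonean,
`n ≥ 2`), the subgroup generated by the self-adjoint unitaries (symmetries)
consists exactly of the unitaries whose determinant squares to `1`. -/
theorem symmetry_subgroup_eq_det_sq_one
    {X : Type*} [TopologicalSpace X] [CompactSpace X] [T2Space X]
    [ExtremallyDisconnected X]
    {n : ℕ} (hn : 2 ≤ n)
    (u : unitary (Matrix (Fin n) (Fin n) C(X, ℂ))) :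
    u ∈ Subgroup.closure
        {v : unitary (Matrix (Fin n) (Fin n) C(X, ℂ)) |
          star (v : Matrix (Fin n) (Fin n) C(X, ℂ)) = (v : Matrix (Fin n) (Fin n) C(X, ℂ))}
      ↔ ((u : Matrix (Fin n) (Fin n) C(X, ℂ)).det) ^ 2 = 1 := by
  constructor
  · intro h
    exact sq_det_eq_one_of_mem h
  · intro h
    exact mem_symClosure_of_det_sq h
end

section
/- There is no ℂ-linear map h : M₂(ℂ) → M₂(ℂ) satisfying all of: (i) h(0) = 0 and h(1) = 1; (ii) h(p) = 1 − p for every projection p ∈ M₂(ℂ) with p ≠ 0 and p ≠ 1; and (iii) h(u) = (det u) • u for every unitary matrix u ∈ M₂(ℂ) with (det u)² = 1. -/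
open Matrix

/-- No `ℂ`-linear map on `M₂(ℂ)` sends `0 ↦ 0`, `1 ↦ 1`, every nontrivial
projection `p` to `1 - p`, and every unitary `u` with `(det u)² = 1` to
`(det u) • u`. -/
theorem no_linear_extension_of_equivariant_pair :
    ¬ ∃ h : Matrix (Fin 2) (Fin 2) ℂ →ₗ[ℂ] Matrix (Fin 2) (Fin 2) ℂ,
      h 0 = 0 ∧ h 1 = 1 ∧
      (∀ p : Matrix (Fin 2) (Fin 2) ℂ,
        p * p = p → star p = p → p ≠ 0 → p ≠ 1 → h p = 1 - p) ∧
      (∀ u : Matrix (Fin 2) (Fin 2) ℂ,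
        u * star u = 1 → star u * u = 1 → u.det ^ 2 = 1 → h u = u.det • u) := by
  rintro ⟨h, -, -, hproj, huni⟩
  set p : Matrix (Fin 2) (Fin 2) ℂ := !![1,0;0,0] with hp
  set q : Matrix (Fin 2) (Fin 2) ℂ := !![0,0;0,1] with hq
  set u : Matrix (Fin 2) (Fin 2) ℂ := !![Complex.I,0;0,-Complex.I] with hu
  have hpp : h p = 1 - p := by
    apply hproj
    · ext i j; fin_cases i <;> fin_cases j <;> simp [hp, Matrix.mul_apply, Fin.sum_univ_two]
    · ext i j; fin_cases i <;> fin_cases j <;> simp [hp]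
    · intro hc
      have := congrFun (congrFun hc 0) 0
      simp [hp] at this
    · intro hc
      have := congrFun (congrFun hc 1) 1
      simp [hp, Matrix.one_apply] at this
  have hqq : h q = 1 - q := by
    apply hproj
    · ext i j; fin_cases i <;> fin_cases j <;> simp [hq, Matrix.mul_apply, Fin.sum_univ_two]
    · ext i j; fin_cases i <;> fin_cases j <;> simp [hq]
    · intro hc
      have := congrFun (congrFun hc 1) 1
      simp [hq] at this
    · intro hc
      have := congrFun (congrFun hc 0) 0
      simp [hq, Matrix.one_apply] at this
  have hdet : u.det = 1 := by
    simp [hu, Matrix.det_fin_two_of]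
  have huu : h u = u := by
    rw [huni u ?_ ?_ (by rw [hdet]; ring), hdet, one_smul]
    · ext i j; fin_cases i <;> fin_cases j <;>
        simp [hu, Matrix.mul_apply, Fin.sum_univ_two, Matrix.one_apply, Complex.ext_iff]
    · ext i j; fin_cases i <;> fin_cases j <;>
        simp [hu, Matrix.mul_apply, Fin.sum_univ_two, Matrix.one_apply, Complex.ext_iff]
  have hsum : u = Complex.I • p - Complex.I • q := by
    ext i j; fin_cases i <;> fin_cases j <;> simp [hu, hp, hq]
  have : u = -u := by
    conv_lhs => rw [← huu, hsum]
    rw [map_sub, h.map_smul, h.map_smul, hpp, hqq]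
    ext i j
    fin_cases i <;> fin_cases j <;>
      simp [hu, hp, hq, Matrix.one_apply, Matrix.sub_apply]
  have := congrFun (congrFun this 0) 0
  simp [hu, Complex.ext_iff] at this
  norm_num at this
end

section
/- Let A and B be unital C*-algebras such that the closure of the ℂ-linear span of the set of projections of A is all of A. Let g : A → B be a continuous ℂ-linear map with g(1) = 1 such that g((1 − 2p)(1 − 2q)) = (1 − 2·g(p))·(1 − 2·g(q)) for all projections p, q ∈ A. Then g is multiplicative: g(a·b) = g(a)·g(b) for all a, b ∈ A. -/
/-- If a unital C*-algebra `A` is the closed linear span of its projections,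
then any continuous unital linear map `g : A → B` satisfying
`g((1-2p)(1-2q)) = (1-2g(p))(1-2g(q))` for all projections `p, q` is
multiplicative. -/
theorem multiplicative_of_symmetry_condition
    {A B : Type*} [CStarAlgebra A] [CStarAlgebra B]
    (hspan : closure
      (↑(Submodule.span ℂ {p : A | p * p = p ∧ star p = p}) : Set A) = Set.univ)
    (g : A →L[ℂ] B)
    (hone : g 1 = 1)
    (hsym : ∀ p q : A, (p * p = p ∧ star p = p) → (q * q = q ∧ star q = q) →
      g ((1 - 2 • p) * (1 - 2 • q)) = (1 - 2 • g p) * (1 - 2 • g q)) :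
    ∀ a b : A, g (a * b) = g a * g b := by
  set S : Set A := {p : A | p * p = p ∧ star p = p} with hS
  -- auxiliary: two continuous linear maps agreeing on S agree everywhere
  have key : ∀ f₁ f₂ : A →L[ℂ] B, (∀ p ∈ S, f₁ p = f₂ p) → ∀ a, f₁ a = f₂ a := by
    intro f₁ f₂ h a
    have hsub : (↑(Submodule.span ℂ S) : Set A) ⊆ {x | f₁ x = f₂ x} := by
      intro x hx
      have : x ∈ LinearMap.ker ((f₁ : A →ₗ[ℂ] B) - (f₂ : A →ₗ[ℂ] B)) := by
        refine Submodule.span_le.mpr ?_ hx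
        intro p hp
        simp [LinearMap.mem_ker, sub_eq_zero, h p hp]
      simpa [LinearMap.mem_ker, sub_eq_zero] using this
    have hcl : IsClosed {x : A | f₁ x = f₂ x} :=
      isClosed_eq f₁.continuous f₂.continuous
    have := closure_minimal hsub hcl
    rw [hspan] at this
    exact this (Set.mem_univ a)
  -- projections multiply
  have hproj : ∀ p q : A, p ∈ S → q ∈ S → g (p * q) = g p * g q := by
    intro p q hp hq
    have h := hsym p q hp hq
    have hl : (1 - 2 • p) * (1 - 2 • q) = 1 - 2 • p - 2 • q + 4 • (p * q) := by
      noncomm_ring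
    have hr : (1 - 2 • g p) * (1 - 2 • g q)
        = 1 - 2 • g p - 2 • g q + 4 • (g p * g q) := by noncomm_ring
    rw [hl, hr] at h
    have h2 : g (1 - 2 • p - 2 • q + 4 • (p * q))
        = g 1 - 2 • g p - 2 • g q + 4 • g (p * q) := by
      simp only [map_add, map_sub, map_nsmul]
    rw [h2, hone] at h
    have h3 : (4 : ℕ) • g (p * q) = (4 : ℕ) • (g p * g q) := by
      have := h
      abel_nf at this ⊢
      linear_combination (norm := abel_nf) this
    have h4 : ((4 : ℂ)) • g (p * q) = ((4 : ℂ)) • (g p * g q) := by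
      rw [← Nat.cast_ofNat (n := 4), Nat.cast_smul_eq_nsmul, Nat.cast_smul_eq_nsmul]
      exact h3
    exact smul_right_injective B (by norm_num : (4:ℂ) ≠ 0) h4
  -- step one: g (a * q) = g a * g q for q ∈ S
  have step1 : ∀ q ∈ S, ∀ a : A, g (a * q) = g a * g q := by
    intro q hq a
    have := key (g.comp ((ContinuousLinearMap.mul ℂ A).flip q))
      (((ContinuousLinearMap.mul ℂ B).flip (g q)).comp g) ?_ a
    · simpa using this
    · intro p hp
      simpa using hproj p q hp hq
  intro a b
  have := key (g.comp (ContinuousLinearMap.mul ℂ A a))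
    ((ContinuousLinearMap.mul ℂ B (g a)).comp g) ?_ b
  · simpa using this
  · intro q hq
    simpa using step1 q hq a
end

section
/- Let A and B be unital C*-algebras and let f : A → B be a function satisfying: (i) f(1) = 1; (ii) for all normal a, b ∈ A with a·b = b·a: f(a·b) = f(a)·f(b) and f(a + b) = f(a) + f(b); (iii) f(z • a) = z • f(a) for every z ∈ ℂ and every normal a ∈ A; (iv) f(a*) = f(a)* for every normal a ∈ A; (v) f restricts to a group homomorphism on unitaries: f(u) is unitary for every unitary u ∈ A, and f(u·v) = f(u)·f(v) for all unitaries u, v ∈ A. Then the following are equivalent: (1) there exists a unital ℂ-algebra homomorphism g : A → B with g(a*) = g(a)* for all a ∈ A and g(a) = f(a) for every normal a ∈ A; (2) f is additive on self-adjoint elements: f(a + b) = f(a) + f(b) for all self-adjoint a, b ∈ A. -/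
section Aux

variable {A : Type*} [CStarAlgebra A]

/-- Real part. -/
noncomputable def myRe (a : A) : A := (2⁻¹ : ℂ) • (a + star a)

/-- Imaginary part. -/
noncomputable def myIm (a : A) : A := (-(2⁻¹) * Complex.I : ℂ) • (a - star a)

lemma myRe_sa (a : A) : IsSelfAdjoint (myRe a) := by
  rw [IsSelfAdjoint, myRe, star_smul, star_add, star_star]
  rw [show star (2⁻¹ : ℂ) = (2⁻¹ : ℂ) from by simp]
  module

lemma myIm_sa (a : A) : IsSelfAdjoint (myIm a) := by
  rw [IsSelfAdjoint, myIm, star_smul, star_sub, star_star]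
  rw [show star (-(2⁻¹) * Complex.I : ℂ) = (2⁻¹ * Complex.I : ℂ) from by
    simp [Complex.star_def, Complex.conj_I]]
  module

lemma myDecomp (a : A) : myRe a + Complex.I • myIm a = a := by
  rw [myRe, myIm, smul_smul, show Complex.I * (-(2⁻¹) * Complex.I) = (2⁻¹ : ℂ) from by
    linear_combination (-(2⁻¹) : ℂ) * Complex.I_mul_I]
  module

lemma myRe_add (a b : A) : myRe (a + b) = myRe a + myRe b := by
  simp only [myRe, star_add]; module

lemma myIm_add (a b : A) : myIm (a + b) = myIm a + myIm b := by
  simp only [myIm, star_add]; module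

lemma myRe_real_smul (x : ℝ) (a : A) : myRe ((x : ℂ) • a) = (x : ℂ) • myRe a := by
  simp only [myRe, star_smul, Complex.star_def, Complex.conj_ofReal]; module

lemma myIm_real_smul (x : ℝ) (a : A) : myIm ((x : ℂ) • a) = (x : ℂ) • myIm a := by
  simp only [myIm, star_smul, Complex.star_def, Complex.conj_ofReal]; module

lemma myRe_I_smul (a : A) : myRe (Complex.I • a) = - myIm a := by
  simp only [myRe, myIm, star_smul, Complex.star_def, Complex.conj_I]; module

lemma myIm_I_smul (a : A) : myIm (Complex.I • a) = myRe a := by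
  simp only [myIm, myRe, star_smul, Complex.star_def, Complex.conj_I, smul_sub, smul_smul,
    sub_neg_eq_add]
  rw [show (-(2⁻¹) * Complex.I) * Complex.I = (2⁻¹ : ℂ) from by
    linear_combination (-(2⁻¹) : ℂ) * Complex.I_mul_I]
  rw [show (-(2⁻¹) * Complex.I) * -Complex.I = (-(2⁻¹) : ℂ) from by
    linear_combination (2⁻¹ : ℂ) * Complex.I_mul_I]
  module

lemma myRe_one : myRe (1 : A) = 1 := by
  rw [myRe, star_one, show (1 : A) + 1 = (2 : ℂ) • (1 : A) from by rw [two_smul], smul_smul]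
  norm_num

lemma myIm_one : myIm (1 : A) = 0 := by
  rw [myIm, star_one, sub_self, smul_zero]

lemma myRe_zero : myRe (0 : A) = 0 := by simp [myRe]

lemma myIm_zero : myIm (0 : A) = 0 := by simp [myIm]

lemma myRe_star (a : A) : myRe (star a) = myRe a := by
  simp only [myRe, star_star]; module

lemma myIm_star (a : A) : myIm (star a) = - myIm a := by
  simp only [myIm, star_star]; module

lemma myComm (a : A) (h : a * star a = star a * a) : myRe a * myIm a = myIm a * myRe a := by
  rw [myRe, myIm]
  simp only [smul_mul_assoc, mul_smul_comm, smul_smul]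
  rw [mul_comm (2⁻¹ : ℂ)]
  congr 1
  simp only [mul_sub, sub_mul, add_mul, mul_add, h]
  abel

lemma my_unitary_decomp (x : A) (hx : IsSelfAdjoint x)
    (hx1 : ‖x‖ ≤ 1) : ∃ u ∈ unitary A, x = (2⁻¹ : ℂ) • (u + star u) := by
  rcases subsingleton_or_nontrivial A with hA | hA
  · exact ⟨1, one_mem _, Subsingleton.elim _ _⟩
  set c : A := cfc (fun t : ℝ => Real.sqrt (1 - t ^ 2)) x with hc
  have hcsa : IsSelfAdjoint c := cfc_predicate _ x
  have hcx : c * x = x * c := by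
    conv_lhs => rw [← cfc_id' ℝ x (ha := hx)]
    conv_rhs => rw [← cfc_id' ℝ x (ha := hx)]
    rw [← cfc_mul _ _ x (by fun_prop) (by fun_prop),
        ← cfc_mul _ _ x (by fun_prop) (by fun_prop)]
    exact cfc_congr fun t _ => mul_comm _ _
  have hsq : x * x + c * c = 1 := by
    conv_lhs => rw [← cfc_id' ℝ x (ha := hx)]
    rw [← cfc_mul _ _ x (by fun_prop) (by fun_prop),
        ← cfc_mul _ _ x (by fun_prop) (by fun_prop),
        ← cfc_add x _ _ (by fun_prop) (by fun_prop)]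
    have : (spectrum ℝ x).EqOn (fun t => t * t + Real.sqrt (1 - t ^ 2) * Real.sqrt (1 - t ^ 2))
        (fun _ => (1 : ℝ)) := by
      intro t ht
      have hnorm : ‖t‖ ≤ 1 := (spectrum.norm_le_norm_of_mem ht).trans hx1
      have h1 : 1 - t ^ 2 ≥ 0 := by
        rw [Real.norm_eq_abs] at hnorm
        nlinarith [abs_nonneg t, sq_abs t]
      simp only [Real.mul_self_sqrt h1]
      ring
    rw [cfc_congr this, cfc_const _ _ hx]
    simp
  have hstaru : star (x + Complex.I • c) = x - Complex.I • c := by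
    simp [star_smul, hx.star_eq, hcsa.star_eq, Complex.conj_I, sub_eq_add_neg]
  have expand1 : (x + Complex.I • c) * (x - Complex.I • c) = x * x + c * c := by
    simp only [mul_sub, add_mul, sub_mul, mul_add, smul_mul_assoc, mul_smul_comm, smul_add,
      smul_sub, smul_smul, Complex.I_mul_I, neg_one_smul, hcx]
    abel
  have expand2 : (x - Complex.I • c) * (x + Complex.I • c) = x * x + c * c := by
    simp only [mul_sub, add_mul, sub_mul, mul_add, smul_mul_assoc, mul_smul_comm, smul_add,
      smul_sub, smul_smul, Complex.I_mul_I, neg_one_smul, hcx]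
    abel
  refine ⟨x + Complex.I • c, ?_, ?_⟩
  · rw [Unitary.mem_iff, hstaru, expand1, expand2, hsq]
    exact ⟨rfl, rfl⟩
  · rw [hstaru]
    have h2 : (x + Complex.I • c) + (x - Complex.I • c) = (2 : ℂ) • x := by
      rw [two_smul]; abel
    rw [h2, smul_smul]
    norm_num

lemma my_sa_mem_span_unitary (x : A) (hx : IsSelfAdjoint x) :
    x ∈ Submodule.span ℂ (unitary A : Set A) := by
  rcases eq_or_ne x 0 with rfl | hx0
  · exact zero_mem _
  set y : A := (‖x‖⁻¹ : ℂ) • x with hy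
  have hysa : IsSelfAdjoint y := by
    rw [IsSelfAdjoint, hy, star_smul, hx.star_eq, Complex.star_def, ← Complex.ofReal_inv,
      Complex.conj_ofReal, Complex.ofReal_inv]
  have hy1 : ‖y‖ ≤ 1 := by
    rw [hy, norm_smul]
    simp only [norm_inv, Complex.norm_real, Real.norm_eq_abs, abs_norm]
    rw [inv_mul_cancel₀ (norm_ne_zero_iff.mpr hx0)]
  obtain ⟨u, hu, hdecomp⟩ := my_unitary_decomp y hysa hy1
  have hn : x = (‖x‖ : ℂ) • y := by
    rw [hy, smul_smul, mul_inv_cancel₀, one_smul]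
    exact_mod_cast norm_ne_zero_iff.mpr hx0
  have hx_eq : x = ((‖x‖ : ℂ) * 2⁻¹) • u + ((‖x‖ : ℂ) * 2⁻¹) • star u := by
    conv_lhs => rw [hn, hdecomp]
    rw [smul_smul, smul_add]
  rw [hx_eq]
  exact add_mem (Submodule.smul_mem _ _ (Submodule.subset_span hu))
    (Submodule.smul_mem _ _ (Submodule.subset_span (Unitary.star_mem hu)))

lemma my_mem_span_unitary (a : A) :
    a ∈ Submodule.span ℂ (unitary A : Set A) := by
  rw [← myDecomp a]
  exact add_mem (my_sa_mem_span_unitary _ (myRe_sa a))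
    (Submodule.smul_mem _ _ (my_sa_mem_span_unitary _ (myIm_sa a)))

end Aux

/-- A morphism of piecewise C*-algebras `N(A) → N(B)` that restricts to a group
homomorphism on unitaries extends to a `*`-homomorphism `A → B` iff it is
additive on self-adjoint elements. -/
theorem extends_to_star_hom_iff_additive_on_selfAdjoint
    {A B : Type*} [CStarAlgebra A] [CStarAlgebra B]
    (f : A → B)
    (hone : f 1 = 1)
    (hmul : ∀ a b : A, a * star a = star a * a → b * star b = star b * b →
      a * b = b * a → f (a * b) = f a * f b)
    (hadd : ∀ a b : A, a * star a = star a * a → b * star b = star b * b →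
      a * b = b * a → f (a + b) = f a + f b)
    (hsmul : ∀ (z : ℂ) (a : A), a * star a = star a * a → f (z • a) = z • f a)
    (hstar : ∀ a : A, a * star a = star a * a → f (star a) = star (f a))
    (hunitary : ∀ u : A, u ∈ unitary A → f u ∈ unitary B)
    (hunitary_mul : ∀ u v : A, u ∈ unitary A → v ∈ unitary A →
      f (u * v) = f u * f v) :
    (∃ g : A →ₐ[ℂ] B, (∀ a : A, g (star a) = star (g a)) ∧
        ∀ a : A, a * star a = star a * a → g a = f a) ↔
      (∀ a b : A, star a = a → star b = b → f (a + b) = f a + f b) := by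
  constructor
  · rintro ⟨g, hgstar, hgf⟩ a b ha hb
    have hna : a * star a = star a * a := by rw [ha]
    have hnb : b * star b = star b * b := by rw [hb]
    have hnab : (a + b) * star (a + b) = star (a + b) * (a + b) := by
      rw [star_add, ha, hb]
    rw [← hgf _ hnab, ← hgf _ hna, ← hgf _ hnb, map_add]
  · intro H
    have hnsa : ∀ c : A, IsSelfAdjoint c → c * star c = star c * c := fun c hc => by
      rw [hc.star_eq]
    have hnT : ∀ a : A, myRe a * star (myRe a) = star (myRe a) * myRe a :=
      fun a => hnsa _ (myRe_sa a)
    have hnS : ∀ a : A, myIm a * star (myIm a) = star (myIm a) * myIm a :=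
      fun a => hnsa _ (myIm_sa a)
    have hf0 : f 0 = 0 := by
      have h2 : f 0 = f 0 + f 0 := by
        simpa using (hadd 0 0 (by simp) (by simp) (by simp))
      exact left_eq_add.mp h2
    have hf_sa_star : ∀ c : A, IsSelfAdjoint c → star (f c) = f c := by
      intro c hc
      rw [← hstar c (hnsa c hc), hc.star_eq]
    have hf_neg : ∀ c : A, c * star c = star c * c → f (-c) = - f c := by
      intro c h
      have := hsmul (-1) c h
      simpa using this
    have hsmul_normal : ∀ (z : ℂ) (c : A), IsSelfAdjoint c →
        (z • c) * star (z • c) = star (z • c) * (z • c) := by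
      intro z c hc
      rw [star_smul, hc.star_eq, smul_mul_assoc, smul_mul_assoc, mul_smul_comm,
        mul_smul_comm, smul_smul, smul_smul, mul_comm z]
    set F : A → B := fun a => f (myRe a) + Complex.I • f (myIm a) with hF
    have hF_normal : ∀ a : A, a * star a = star a * a → F a = f a := by
      intro a h
      have hcomm : myRe a * (Complex.I • myIm a) = (Complex.I • myIm a) * myRe a := by
        rw [mul_smul_comm, smul_mul_assoc, myComm a h]
      have key := hadd (myRe a) (Complex.I • myIm a) (hnT a)
        (hsmul_normal _ _ (myIm_sa a)) hcomm
      rw [myDecomp a] at key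
      simp only [hF]
      rw [key, hsmul Complex.I (myIm a) (hnS a)]
    have hF_add : ∀ a b : A, F (a + b) = F a + F b := by
      intro a b
      simp only [hF]
      rw [myRe_add, myIm_add, H _ _ (myRe_sa a).star_eq (myRe_sa b).star_eq,
        H _ _ (myIm_sa a).star_eq (myIm_sa b).star_eq, smul_add]
      abel
    have hF0 : F 0 = 0 := by
      simp only [hF]
      rw [myRe_zero, myIm_zero, hf0, smul_zero, add_zero]
    have hF_rsmul : ∀ (x : ℝ) (a : A), F ((x : ℂ) • a) = (x : ℂ) • F a := by
      intro x a
      simp only [hF]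
      rw [myRe_real_smul, myIm_real_smul, hsmul _ _ (hnT a), hsmul _ _ (hnS a),
        smul_add, smul_comm]
    have hF_Ismul : ∀ a : A, F (Complex.I • a) = Complex.I • F a := by
      intro a
      simp only [hF]
      rw [myRe_I_smul, myIm_I_smul, hf_neg _ (hnS a), smul_add, smul_smul,
        Complex.I_mul_I, neg_one_smul]
      abel
    have hF_smul : ∀ (z : ℂ) (a : A), F (z • a) = z • F a := by
      intro z a
      have hz : z • a = (z.re : ℂ) • a + (z.im : ℂ) • (Complex.I • a) := by
        rw [smul_smul, ← add_smul]
        congr 1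
        exact (Complex.re_add_im z).symm
      rw [hz, hF_add, hF_rsmul, hF_rsmul, hF_Ismul, smul_smul, ← add_smul,
        Complex.re_add_im]
    have hFu : ∀ u ∈ unitary A, ∀ v ∈ unitary A, F (u * v) = F u * F v := by
      intro u hu v hv
      have hnu : u * star u = star u * u := by
        rw [(Unitary.mem_iff.mp hu).1, (Unitary.mem_iff.mp hu).2]
      have hnv : v * star v = star v * v := by
        rw [(Unitary.mem_iff.mp hv).1, (Unitary.mem_iff.mp hv).2]
      have huv : u * v ∈ unitary A := mul_mem hu hv
      have hnuv : (u * v) * star (u * v) = star (u * v) * (u * v) := by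
        rw [(Unitary.mem_iff.mp huv).1, (Unitary.mem_iff.mp huv).2]
      rw [hF_normal _ hnuv, hF_normal _ hnu, hF_normal _ hnv]
      exact hunitary_mul u v hu hv
    have hF_mul : ∀ a b : A, F (a * b) = F a * F b := by
      intro a b
      refine Submodule.span_induction₂
        (p := fun x y _ _ => F (x * y) = F x * F y)
        (fun u v hu hv => hFu u hu v hv)
        (fun y _ => by show F (0 * y) = F 0 * F y; rw [zero_mul, hF0, zero_mul])
        (fun x _ => by show F (x * 0) = F x * F 0; rw [mul_zero, hF0, mul_zero])
        (fun x y z _ _ _ h1 h2 => by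
          have h1' : F (x * z) = F x * F z := h1
          have h2' : F (y * z) = F y * F z := h2
          show F ((x + y) * z) = F (x + y) * F z
          rw [add_mul, hF_add, h1', h2']
          conv_rhs => rw [hF_add, add_mul])
        (fun x y z _ _ _ h1 h2 => by
          have h1' : F (x * y) = F x * F y := h1
          have h2' : F (x * z) = F x * F z := h2
          show F (x * (y + z)) = F x * F (y + z)
          rw [mul_add, hF_add, h1', h2']
          conv_rhs => rw [hF_add, mul_add])
        (fun r x y _ _ h1 => by
          have h1' : F (x * y) = F x * F y := h1
          show F ((r • x) * y) = F (r • x) * F y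
          rw [smul_mul_assoc, hF_smul, h1', hF_smul, smul_mul_assoc])
        (fun r x y _ _ h1 => by
          have h1' : F (x * y) = F x * F y := h1
          show F (x * (r • y)) = F x * F (r • y)
          rw [mul_smul_comm, hF_smul, h1', hF_smul, mul_smul_comm])
        (my_mem_span_unitary a) (my_mem_span_unitary b)
    have hF1 : F 1 = 1 := by
      simp only [hF]
      rw [myRe_one, myIm_one, hone, hf0, smul_zero, add_zero]
    set glin : A →ₗ[ℂ] B :=
      { toFun := F, map_add' := hF_add, map_smul' := hF_smul } with hglin
    refine ⟨AlgHom.ofLinearMap glin hF1 hF_mul, ?_, ?_⟩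
    · intro a
      show F (star a) = star (F a)
      simp only [hF]
      rw [myRe_star, myIm_star, hf_neg _ (hnS a), star_add, star_smul, Complex.star_def,
        Complex.conj_I, hf_sa_star _ (myRe_sa a), hf_sa_star _ (myIm_sa a), smul_neg, neg_smul]
    · intro a ha
      show F a = f a
      exact hF_normal a ha
end
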